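/- arXiv:2201.12508 — 4 statements merged into one kernel-verified Lean document; each statement's English description precedes it below -/
import Mathlib

section
/- Let R = K[H] be a numerical semigroup ring of Cohen-Macaulay type 2 with canonical ideal C = t^{F(H)}·ω_R. Then ℓ_R(R/tr_R(ω_R)) ≤ ℓ_R(C/R), where tr_R(ω_R) = (R:C)·C is the trace of the canonical module. -/
set_option synthInstance.maxHeartbeats 1000000
set_option maxHeartbeats 2000000

noncomputable section

open Polynomial

/-- The length of an `R`-module `M`, realized as the Krull dimension of its lattice of
submodules (for modules of finite length this is the usual Jordan–Hölder length). -/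
noncomputable def moduleLength (R M : Type*) [Ring R] [AddCommGroup M] [Module R M] :
    WithBot ℕ∞ :=
  Order.krullDim (Submodule R M)

/-- The numerical semigroup ring `R = K[H] = K[t^h : h ∈ H]`, realized as the subalgebra of
the rational function field `K(t)` generated by the monomials `t^h`, `h ∈ H`. -/
def nsRing (K : Type*) [Field K] (H : AddSubmonoid ℕ) : Subalgebra K (RatFunc K) :=
  Algebra.adjoin K {x : RatFunc K | ∃ h ∈ H, x = (RatFunc.X : RatFunc K) ^ h}

/-- The (graded) canonical module `ω_R = Σ_{α ∈ ℕ∖H} R·t^{-α}` of `K[H]`, as an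
`R`-submodule of `K(t)`. -/
def nsOmega (K : Type*) [Field K] (H : AddSubmonoid ℕ) :
    Submodule ↥(nsRing K H) (RatFunc K) :=
  Submodule.span ↥(nsRing K H)
    {x : RatFunc K | ∃ α : ℕ, α ∉ H ∧ x = (RatFunc.X : RatFunc K) ^ (-(α : ℤ))}

/-- The canonical ideal `C = t^{F(H)}·ω_R = Σ_{α ∈ ℕ∖H} R·t^{F(H)-α} ⊆ K[t]`. -/
def nsC (K : Type*) [Field K] (H : AddSubmonoid ℕ) (F : ℕ) :
    Submodule ↥(nsRing K H) (RatFunc K) :=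
  Submodule.span ↥(nsRing K H)
    {x : RatFunc K | ∃ α : ℕ, α ∉ H ∧ x = (RatFunc.X : RatFunc K) ^ ((F : ℤ) - (α : ℤ))}


/-- The set of pseudo-Frobenius numbers of `H`. -/
def PF (H : AddSubmonoid ℕ) : Set ℕ :=
  {α : ℕ | α ∉ H ∧ ∀ h ∈ H, h ≠ 0 → α + h ∈ H}

/-- The trace of the canonical module, `tr_R(ω_R) = (R:C)·C`, as an ideal of `R = K[H]`
(colon taken in the total ring of fractions `K(t)`, realized by `Submodule.div`). -/
def trC (K : Type*) [Field K] (H : AddSubmonoid ℕ) (F : ℕ) : Ideal ↥(nsRing K H) :=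
  (((1 : Submodule ↥(nsRing K H) (RatFunc K)) / nsC K H F) * nsC K H F).comap
    (Algebra.linearMap ↥(nsRing K H) (RatFunc K))

section Aux

variable {K : Type*} [Field K] {H : AddSubmonoid ℕ}

/-- Every gap of `H` reaches a pseudo-Frobenius number by adding an element of `H`. -/
lemma exists_pf_aux (hfin : {n : ℕ | n ∉ H}.Finite) {α : ℕ} (hα : α ∉ H) :
    ∃ p ∈ PF H, ∃ h ∈ H, α + h = p := by
  classical
  set S : Set ℕ := {n : ℕ | n ∉ H ∧ ∃ h ∈ H, α + h = n} with hSdef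
  have hSfin : S.Finite := hfin.subset fun n hn => hn.1
  have hSne : S.Nonempty := ⟨α, hα, 0, H.zero_mem, add_zero α⟩
  obtain ⟨m, hm, hmax⟩ := Set.Finite.exists_maximalFor id S hSfin hSne
  obtain ⟨hmH, h₀, hh₀, hsum⟩ := hm
  refine ⟨m, ⟨hmH, ?_⟩, h₀, hh₀, hsum⟩
  intro h hh hne
  by_contra hc
  have hmem : m + h ∈ S := ⟨hc, h₀ + h, H.add_mem hh₀ hh, by omega⟩
  have := hmax hmem (by simp)
  simp only [id] at this
  omega

lemma memR (h : ℕ) (hh : h ∈ H) :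
    (RatFunc.X : RatFunc K) ^ h ∈ nsRing K H :=
  Algebra.subset_adjoin ⟨h, hh, rfl⟩

lemma mem_one_of_pow (h : ℕ) (hh : h ∈ H) :
    (RatFunc.X : RatFunc K) ^ h ∈ (1 : Submodule ↥(nsRing K H) (RatFunc K)) := by
  rw [Submodule.one_eq_range]
  exact ⟨⟨_, memR h hh⟩, rfl⟩

/-- Under type-2 hypotheses, the canonical ideal is `R + R·t^{F-f}`. -/
lemma nsC_eq (K : Type*) [Field K] (H : AddSubmonoid ℕ)
    (hfin : {n : ℕ | n ∉ H}.Finite)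
    (F f : ℕ) (hF : F ∉ H) (hfH : f ∉ H) (hfF : f < F)
    (hPF : PF H = {f, F}) :
    nsC K H F = (1 : Submodule ↥(nsRing K H) (RatFunc K)) ⊔
      Submodule.span ↥(nsRing K H) {(RatFunc.X : RatFunc K) ^ (F - f)} := by
  have hX0 : (RatFunc.X : RatFunc K) ≠ 0 := RatFunc.X_ne_zero
  apply le_antisymm
  · rw [nsC, Submodule.span_le]
    rintro x ⟨α, hα, rfl⟩
    simp only [SetLike.mem_coe]
    obtain ⟨p, hp, h, hh, hsum⟩ := exists_pf_aux hfin hα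
    rw [hPF] at hp
    rcases hp with hp | hp
    · -- p = f ; exponent F - α = (F - f) + h
      have hexp : (F : ℤ) - (α : ℤ) = ((F - f : ℕ) : ℤ) + (h : ℤ) := by omega
      have hxeq : (RatFunc.X : RatFunc K) ^ ((F : ℤ) - (α : ℤ))
          = (⟨_, memR h hh⟩ : ↥(nsRing K H)) • (RatFunc.X : RatFunc K) ^ (F - f) := by
        rw [hexp, zpow_add₀ hX0, zpow_natCast, zpow_natCast, Algebra.smul_def]
        show _ = (RatFunc.X : RatFunc K) ^ h * _
        ring
      rw [hxeq]
      exact Submodule.mem_sup_right (Submodule.smul_mem _ _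
        (Submodule.mem_span_singleton_self _))
    · -- p = F ; exponent is h
      rw [Set.mem_singleton_iff] at hp
      have hexp : (F : ℤ) - (α : ℤ) = (h : ℤ) := by omega
      have hxeq : (RatFunc.X : RatFunc K) ^ ((F : ℤ) - (α : ℤ))
          = (RatFunc.X : RatFunc K) ^ h := by rw [hexp, zpow_natCast]
      rw [hxeq]
      exact Submodule.mem_sup_left (mem_one_of_pow h hh)
  · apply sup_le
    · rw [Submodule.one_eq_span, Submodule.span_le, Set.singleton_subset_iff]
      exact Submodule.subset_span ⟨F, hF, by rw [sub_self, zpow_zero]⟩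
    · rw [Submodule.span_le, Set.singleton_subset_iff]
      refine Submodule.subset_span ⟨f, hfH, ?_⟩
      rw [← zpow_natCast (RatFunc.X : RatFunc K) (F - f)]
      congr 1
      omega

end Aux

/-- If `R = K[H]` has Cohen-Macaulay type `2` (i.e. `|PF(H)| = 2`), then
`ℓ_R(R/tr_R(ω_R)) ≤ ℓ_R(C/R)`, where `C = t^{F(H)}·ω_R` and `tr_R(ω_R) = (R:C)·C`. -/
theorem length_trace_le_of_type_two
    (K : Type*) [Field K] (H : AddSubmonoid ℕ) (hfin : {n : ℕ | n ∉ H}.Finite)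
    (F : ℕ) (hF : F ∉ H) (hFmax : ∀ n : ℕ, F < n → n ∈ H)
    (htype : (PF H).ncard = 2) :
    moduleLength ↥(nsRing K H) (↥(nsRing K H) ⧸ trC K H F) ≤
      moduleLength ↥(nsRing K H)
        (↥(nsC K H F) ⧸
          ((1 : Submodule ↥(nsRing K H) (RatFunc K)).comap (nsC K H F).subtype)) := by
  classical
  -- Extract the second pseudo-Frobenius number f
  have hFPF : F ∈ PF H := ⟨hF, fun h _ hne => hFmax _ (by omega)⟩
  obtain ⟨a, b, hab, hPFab⟩ := Set.ncard_eq_two.mp htype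
  obtain ⟨f, hfne, hPF⟩ : ∃ f, f ≠ F ∧ PF H = {f, F} := by
    have hFmem : F ∈ ({a, b} : Set ℕ) := hPFab ▸ hFPF
    rcases hFmem with hFa | hFb
    · exact ⟨b, by omega, by rw [hPFab, Set.pair_comm, ← hFa]⟩
    · rw [Set.mem_singleton_iff] at hFb
      exact ⟨a, by omega, by rw [hPFab, ← hFb]⟩
  have hfPF : f ∈ PF H := by rw [hPF]; exact Set.mem_insert _ _
  have hfH : f ∉ H := hfPF.1
  have hfF : f < F := by
    rcases Nat.lt_or_ge f F with h | h
    · exact h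
    · rcases Nat.eq_or_lt_of_le h with h' | h'
      · exact absurd h'.symm hfne
      · exact absurd (hFmax f h') hfH
  have hC := nsC_eq K H hfin F f hF hfH hfF hPF
  set Rr := ↥(nsRing K H) with hRr
  set A := RatFunc K with hA
  set C := nsC K H F with hCdef
  set R' : Submodule Rr ↥C := (1 : Submodule Rr A).comap C.subtype with hR'
  set xL : A := (RatFunc.X : RatFunc K) ^ (F - f) with hxL
  have hxLC : xL ∈ C := by
    rw [hC]
    exact Submodule.mem_sup_right (Submodule.mem_span_singleton_self _)
  have h1C : (1 : A) ∈ C := by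
    rw [hC]
    exact Submodule.mem_sup_left (by rw [Submodule.one_eq_span]; exact
      Submodule.mem_span_singleton_self _)
  -- the cyclic generator map
  let g : Rr →ₗ[Rr] ↥C :=
    LinearMap.codRestrict C (LinearMap.toSpanSingleton Rr A xL)
      (fun r => C.smul_mem r hxLC)
  let q1 : Rr →ₗ[Rr] (↥C ⧸ R') := R'.mkQ.comp g
  have hgcoe : ∀ r : Rr, ((g r : ↥C) : A) = (r : A) * xL := by
    intro r
    show (r • xL : A) = _
    rw [Algebra.smul_def]
    rfl
  have hq1 : Function.Surjective q1 := by
    intro y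
    obtain ⟨c, rfl⟩ := Submodule.Quotient.mk_surjective R' y
    have hc : (c : A) ∈ (1 : Submodule Rr A) ⊔ Submodule.span Rr {xL} := by
      rw [← hC]; exact c.2
    obtain ⟨u, hu, v, hv, huv⟩ := Submodule.mem_sup.mp hc
    obtain ⟨r, rfl⟩ := Submodule.mem_span_singleton.mp hv
    refine ⟨r, ?_⟩
    show R'.mkQ (g r) = Submodule.Quotient.mk c
    rw [Submodule.mkQ_apply, Submodule.Quotient.eq]
    rw [hR', Submodule.mem_comap]
    have hcoe : C.subtype (g r - c) = -u := by
      rw [map_sub, Submodule.subtype_apply, hgcoe]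
      rw [Submodule.subtype_apply]
      rw [← huv, Algebra.smul_def]
      show (r : A) * xL - (u + (r : A) * xL) = -u
      ring
    rw [hcoe]
    exact Submodule.neg_mem _ hu
  have hker : LinearMap.ker q1 ≤ trC K H F := by
    intro r hr
    have hr1 : ((g r : ↥C) : A) ∈ (1 : Submodule Rr A) := by
      have h0 : R'.mkQ (g r) = 0 := hr
      rw [Submodule.mkQ_apply, Submodule.Quotient.mk_eq_zero] at h0
      exact h0
    rw [hgcoe] at hr1
    show r ∈ trC K H F
    rw [trC, Submodule.mem_comap, Algebra.linearMap_apply]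
    have hdiv : algebraMap Rr A r ∈ (1 : Submodule Rr A) / C := by
      rw [Submodule.mem_div_iff_forall_mul_mem]
      intro y hy
      rw [hC] at hy
      obtain ⟨u, hu, v, hv, huv⟩ := Submodule.mem_sup.mp hy
      obtain ⟨s, rfl⟩ := Submodule.mem_span_singleton.mp hv
      rw [← huv, mul_add]
      refine Submodule.add_mem _ ?_ ?_
      · rw [Submodule.one_eq_range] at hu ⊢
        obtain ⟨u₀, rfl⟩ := hu
        exact ⟨r * u₀, by simp only [Algebra.linearMap_apply, map_mul]; rfl⟩
      · have : algebraMap Rr A r * (s • xL) = s • ((r : A) * xL) := by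
          rw [Algebra.smul_def, Algebra.smul_def]
          show (r : A) * ((s : A) * xL) = (s : A) * ((r : A) * xL)
          ring
        rw [this]
        exact Submodule.smul_mem _ _ hr1
    have := Submodule.mul_mem_mul hdiv h1C
    rwa [mul_one] at this
  -- build the surjection  C/R' ↠ R/tr  and conclude
  let e := LinearMap.quotKerEquivOfSurjective q1 hq1
  let pmap : (Rr ⧸ LinearMap.ker q1) →ₗ[Rr] (Rr ⧸ trC K H F) :=
    Submodule.mapQ _ _ LinearMap.id (by simpa using hker)
  have hpmap : Function.Surjective pmap := by
    intro y
    obtain ⟨x, rfl⟩ := Submodule.Quotient.mk_surjective (trC K H F) y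
    exact ⟨Submodule.Quotient.mk x, by rw [Submodule.mapQ_apply]; rfl⟩
  let π : (↥C ⧸ R') →ₗ[Rr] (Rr ⧸ trC K H F) :=
    pmap.comp (e.symm : (↥C ⧸ R') →ₗ[Rr] (Rr ⧸ LinearMap.ker q1))
  have hπ : Function.Surjective π := by
    intro y
    obtain ⟨x, rfl⟩ := hpmap y
    exact ⟨e x, by simp [π]⟩
  have hsm : StrictMono (fun N : Submodule Rr (Rr ⧸ trC K H F) => Submodule.comap π N) := by
    intro N N' hNN'
    exact lt_of_le_of_ne (Submodule.comap_mono hNN'.le)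
      (fun hEq => hNN'.ne (Submodule.comap_injective_of_surjective hπ hEq))
  exact Order.krullDim_le_of_strictMono _ hsm
end
end

section
/- Let R = K[H] be a numerical semigroup ring whose Cohen-Macaulay type is at most 3. Then ℓ_R(R/tr_R(ω_R)) ≤ g(H) − n(H). -/
set_option synthInstance.maxHeartbeats 1000000
set_option maxHeartbeats 2000000

noncomputable section

open Polynomial

/-- The trace ideal `tr_R(ω_R) = Σ_{f ∈ Hom_R(ω_R, R)} Im f` of the canonical module of
`R = K[H]`. -/
def trOmega (K : Type*) [Field K] (H : AddSubmonoid ℕ) : Ideal ↥(nsRing K H) :=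
  ⨆ f : ↥(nsOmega K H) →ₗ[↥(nsRing K H)] ↥(nsRing K H), LinearMap.range f

def Dset (H : AddSubmonoid ℕ) : Set ℕ := {z | ∀ γ : ℕ, γ ∉ H → ∃ h ∈ H, z = γ + h}
def Tset (H : AddSubmonoid ℕ) : Set ℕ := {s | ∃ z ∈ Dset H, ∃ γ : ℕ, γ ∉ H ∧ z = s + γ}
def Wset (H : AddSubmonoid ℕ) : Set ℕ := {h | h ∈ H ∧ h ∉ Tset H}

section Comb
variable {H : AddSubmonoid ℕ} {F : ℕ}

lemma gap_le (hFmax : ∀ n : ℕ, F < n → n ∈ H) {γ : ℕ} (hγ : γ ∉ H) : γ ≤ F := by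
  by_contra hc; exact hγ (hFmax _ (by omega))

lemma exists_pf (hfin : {n : ℕ | n ∉ H}.Finite) {γ : ℕ} (hγ : γ ∉ H) :
    ∃ p ∈ PF H, ∃ h ∈ H, p = γ + h := by
  classical
  set S : Set ℕ := {x | x ∉ H ∧ ∃ h ∈ H, x = γ + h} with hS
  have hSfin : S.Finite := hfin.subset (fun x hx => hx.1)
  have hSne : S.Nonempty := ⟨γ, hγ, 0, H.zero_mem, by omega⟩
  obtain ⟨p, hpS, hmax⟩ := Set.Finite.exists_maximalFor id S hSfin hSne
  refine ⟨p, ⟨hpS.1, ?_⟩, hpS.2⟩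
  intro h hh hh0
  by_contra hph
  obtain ⟨h0, hh0', he⟩ := hpS.2
  have hmem : p + h ∈ S := ⟨hph, ⟨h0 + h, H.add_mem hh0' hh, by omega⟩⟩
  have := hmax (j := p + h) hmem (by simp)
  simp at this; omega

lemma F_mem_PF (hF : F ∉ H) (hFmax : ∀ n : ℕ, F < n → n ∈ H) : F ∈ PF H :=
  ⟨hF, fun h _ h0 => hFmax _ (by omega)⟩

lemma W_key (hfin : {n : ℕ | n ∉ H}.Finite) {h : ℕ} (hW : h ∈ Wset H) {β : ℕ} (hβ : β ∉ H) :
    ∃ p ∈ PF H, ¬∃ h' ∈ H, h + β = p + h' := by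
  by_contra hc; push_neg at hc
  apply hW.2
  refine ⟨h + β, ?_, β, hβ, rfl⟩
  intro γ hγ
  obtain ⟨p, hp, h2, hh2, hpe⟩ := exists_pf hfin hγ
  obtain ⟨h', hh', he⟩ := hc p hp
  exact ⟨h2 + h', H.add_mem hh2 hh', by omega⟩

lemma W_split (hfin : {n : ℕ | n ∉ H}.Finite) (hF : F ∉ H) {h : ℕ} (hW : h ∈ Wset H) :
    ∃ p ∈ PF H, p ≠ F ∧ ¬∃ h' ∈ H, h + F = p + h' := by
  obtain ⟨p, hp, hnp⟩ := W_key hfin hW hF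
  refine ⟨p, hp, ?_, hnp⟩
  rintro rfl
  exact hnp ⟨h, hW.1, by omega⟩

lemma lt_of_nodecomp (hFmax : ∀ n : ℕ, F < n → n ∈ H) {h p : ℕ} (hh : h ∈ H) (hp : p ∉ H)
    (hnd : ¬∃ h' ∈ H, h + F = p + h') : h < p := by
  have hpF : p ≤ F := gap_le hFmax hp
  rcases Nat.lt_or_ge h p with h1 | h1
  · exact h1
  exfalso
  have hne : h ≠ p := fun e => hp (e ▸ hh)
  exact hnd ⟨(h - p) + F, hFmax _ (by omega), by omega⟩

theorem comb_main (hfin : {n : ℕ | n ∉ H}.Finite) (hF : F ∉ H)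
    (hFmax : ∀ n : ℕ, F < n → n ∈ H) (htype : (PF H).ncard ≤ 3) :
    (Wset H).ncard + {h : ℕ | h ∈ H ∧ h < F}.ncard ≤ {n : ℕ | n ∉ H}.ncard := by
  classical
  set G := {n : ℕ | n ∉ H} with hG
  set Hn := {h : ℕ | h ∈ H ∧ h < F} with hHn
  have hHnfin : Hn.Finite := (Set.finite_Iio F).subset (fun x hx => hx.2)
  have hBinj : Set.InjOn (fun h => F - h) Hn := by
    intro a ha b hb e
    simp only at e
    have := ha.2; have := hb.2; omega
  have hBsub : (fun h => F - h) '' Hn ⊆ G := by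
    rintro _ ⟨h, ⟨hh, hlt⟩, rfl⟩
    intro hc
    exact hF ((by omega : h + (F - h) = F) ▸ H.add_mem hh hc)
  have hBncard : ((fun h => F - h) '' Hn).ncard = Hn.ncard := Set.ncard_image_of_injOn hBinj
  rcases (Wset H).eq_empty_or_nonempty with hWe | ⟨w0, hw0⟩
  · rw [hWe]
    simp only [Set.ncard_empty, zero_add]
    rw [← hBncard]
    exact Set.ncard_le_ncard hBsub hfin
  · set P' := PF H \ {F} with hP'
    have hP'ne : P'.Nonempty := by
      obtain ⟨p, hp, hpne, _⟩ := W_split hfin hF hw0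
      exact ⟨p, hp, by simpa using hpne⟩
    have hPFfin : (PF H).Finite := hfin.subset (fun p hp => hp.1)
    have hP'fin : P'.Finite := hPFfin.subset Set.diff_subset
    set f1 := sInf P' with hf1def
    set f2 := sSup P' with hf2def
    have hf1 : f1 ∈ P' := Nat.sInf_mem hP'ne
    have hf2 : f2 ∈ P' := Nat.sSup_mem hP'ne hP'fin.bddAbove
    have hf1H : f1 ∉ H := hf1.1.1
    have hf2H : f2 ∉ H := hf2.1.1
    have hf1F : f1 ≤ F := gap_le hFmax hf1H
    have hf2F : f2 ≤ F := gap_le hFmax hf2H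
    have hcover : ∀ p ∈ P', p = f1 ∨ p = f2 := by
      intro p hp
      by_contra hc; push_neg at hc
      have h1 : f1 < p := lt_of_le_of_ne (Nat.sInf_le hp) (Ne.symm hc.1)
      have h2 : p < f2 := lt_of_le_of_ne (le_csSup hP'fin.bddAbove hp) hc.2
      have h3 : f2 < F := lt_of_le_of_ne hf2F (by simpa using hf2.2)
      have hsub : ({f1, p, f2, F} : Set ℕ) ⊆ PF H := by
        rintro x hx
        rcases hx with rfl | rfl | rfl | rfl
        · exact hf1.1
        · exact hp.1
        · exact hf2.1
        · exact F_mem_PF hF hFmax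
      have h4 : ({f1, p, f2, F} : Set ℕ).ncard = 4 := by
        rw [Set.ncard_insert_of_notMem (by simp; omega) (Set.toFinite _),
            Set.ncard_insert_of_notMem (by simp; omega) (Set.toFinite _),
            Set.ncard_insert_of_notMem (by simp; omega) (Set.toFinite _),
            Set.ncard_singleton]
      have := Set.ncard_le_ncard hsub hPFfin
      omega
    set W1 := {h ∈ Wset H | ¬∃ h' ∈ H, h + F = f1 + h'} with hW1def
    have hW2 : ∀ h ∈ Wset H, h ∉ W1 →
        (∃ h' ∈ H, h + F = f1 + h') ∧ ¬∃ h' ∈ H, h + F = f2 + h' := by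
      intro h hh hn
      have hex : ∃ h' ∈ H, h + F = f1 + h' := by
        by_contra hc; exact hn ⟨hh, hc⟩
      refine ⟨hex, ?_⟩
      obtain ⟨p, hp, hpF, hnd⟩ := W_split hfin hF hh
      rcases hcover p ⟨hp, by simpa using hpF⟩ with rfl | rfl
      · exact absurd hex hnd
      · exact hnd
    have hW1lt : ∀ h ∈ W1, h < f1 := fun h hh =>
      lt_of_nodecomp hFmax hh.1.1 hf1H hh.2
    have hW2lt : ∀ h ∈ Wset H, h ∉ W1 → h < f2 := fun h hh hn =>
      lt_of_nodecomp hFmax hh.1 hf2H (hW2 h hh hn).2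
    set Ψ : ℕ → ℕ := fun h =>
      if h ∈ W1 then f1 - h else if ∃ k ∈ W1, h + f1 = k + f2 then (F - f2) + h else f2 - h
      with hΨdef
    have hsum2 : ∀ a ∈ H, ∀ b ∈ H, a + b = f2 → False :=
      fun a ha b hb e => hf2H (e ▸ H.add_mem ha hb)
    have hΨinj : Set.InjOn Ψ (Wset H) := by
      intro x hx y hy he
      by_cases hx1 : x ∈ W1 <;> by_cases hy1 : y ∈ W1
      · simp only [hΨdef, if_pos hx1, if_pos hy1] at he
        have := hW1lt x hx1; have := hW1lt y hy1; omega
      · -- x ∈ W1, y ∉ W1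
        have hylt := hW2lt y hy hy1
        have hxlt := hW1lt x hx1
        by_cases hp : ∃ k ∈ W1, y + f1 = k + f2
        · simp only [hΨdef, if_pos hx1, if_neg hy1, if_pos hp] at he
          obtain ⟨h', hh', e2⟩ := (hW2 y hy hy1).1
          exact absurd (hsum2 x hx.1 h' hh' (by omega)) (by simp)
        · simp only [hΨdef, if_pos hx1, if_neg hy1, if_neg hp] at he
          exact absurd (hp ⟨x, hx1, by omega⟩) (by simp)
      · -- x ∉ W1, y ∈ W1
        have hxlt := hW2lt x hx hx1
        have hylt := hW1lt y hy1
        by_cases hp : ∃ k ∈ W1, x + f1 = k + f2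
        · simp only [hΨdef, if_neg hx1, if_pos hy1, if_pos hp] at he
          obtain ⟨h', hh', e2⟩ := (hW2 x hx hx1).1
          exact absurd (hsum2 y hy.1 h' hh' (by omega)) (by simp)
        · simp only [hΨdef, if_neg hx1, if_pos hy1, if_neg hp] at he
          exact absurd (hp ⟨y, hy1, by omega⟩) (by simp)
      · -- both ∉ W1
        have hxlt := hW2lt x hx hx1
        have hylt := hW2lt y hy hy1
        by_cases hpx : ∃ k ∈ W1, x + f1 = k + f2 <;>
          by_cases hpy : ∃ k ∈ W1, y + f1 = k + f2
        · simp only [hΨdef, if_neg hx1, if_neg hy1, if_pos hpx, if_pos hpy] at he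
          omega
        · simp only [hΨdef, if_neg hx1, if_neg hy1, if_pos hpx, if_neg hpy] at he
          obtain ⟨k, hk1, ek⟩ := hpx
          obtain ⟨h', hh', e2⟩ := (hW2 y hy hy1).1
          have hklt := hW1lt k hk1
          exact absurd (hsum2 k hk1.1.1 h' hh' (by omega)) (by simp)
        · simp only [hΨdef, if_neg hx1, if_neg hy1, if_neg hpx, if_pos hpy] at he
          obtain ⟨k, hk1, ek⟩ := hpy
          obtain ⟨h', hh', e2⟩ := (hW2 x hx hx1).1
          have hklt := hW1lt k hk1
          exact absurd (hsum2 k hk1.1.1 h' hh' (by omega)) (by simp)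
        · simp only [hΨdef, if_neg hx1, if_neg hy1, if_neg hpx, if_neg hpy] at he
          omega
    have hΨL : ∀ w ∈ Wset H, Ψ w ∉ H ∧ F - Ψ w ∉ H := by
      intro w hw
      by_cases hw1 : w ∈ W1
      · simp only [hΨdef, if_pos hw1]
        have hlt := hW1lt w hw1
        constructor
        · intro hc
          exact hf1H ((by omega : w + (f1 - w) = f1) ▸ H.add_mem hw.1 hc)
        · intro hc
          exact hw1.2 ⟨F - (f1 - w), hc, by omega⟩
      · have h2 := hW2 w hw hw1
        have hlt : w < f2 := hW2lt w hw hw1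
        by_cases hp : ∃ k ∈ W1, w + f1 = k + f2
        · simp only [hΨdef, if_neg hw1, if_pos hp]
          constructor
          · intro hc
            exact h2.2 ⟨(F - f2) + w, hc, by omega⟩
          · intro hc
            exact hsum2 w hw.1 _ hc (by omega)
        · simp only [hΨdef, if_neg hw1, if_neg hp]
          constructor
          · intro hc
            exact hsum2 w hw.1 _ hc (by omega)
          · intro hc
            exact h2.2 ⟨F - (f2 - w), hc, by omega⟩
    have hWfin : (Wset H).Finite := by
      apply (Set.finite_Iic F).subset
      intro h hh
      by_cases h1 : h ∈ W1
      · exact le_trans (le_of_lt (hW1lt h h1)) hf1F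
      · exact le_trans (le_of_lt (hW2lt h hh h1)) hf2F
    have hAsub : Ψ '' Wset H ⊆ G := by
      rintro _ ⟨w, hw, rfl⟩
      exact (hΨL w hw).1
    have hdisj : Disjoint (Ψ '' Wset H) ((fun h => F - h) '' Hn) := by
      rw [Set.disjoint_left]
      rintro _ ⟨w, hw, rfl⟩ ⟨h, hh, e⟩
      simp only at e
      have hh2 := hh.2
      have : F - Ψ w = h := by omega
      exact (hΨL w hw).2 (this ▸ hh.1)
    have hcount : (Ψ '' Wset H).ncard + ((fun h => F - h) '' Hn).ncard ≤ G.ncard := by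
      rw [← Set.ncard_union_eq hdisj (hWfin.image _) (hHnfin.image _)]
      exact Set.ncard_le_ncard (Set.union_subset hAsub hBsub) hfin
    calc (Wset H).ncard + Hn.ncard
        = (Ψ '' Wset H).ncard + ((fun h => F - h) '' Hn).ncard := by
          rw [Set.ncard_image_of_injOn hΨinj, hBncard]
      _ ≤ G.ncard := hcount

end Comb

section Alg
variable {K : Type*} [Field K] {H : AddSubmonoid ℕ}

lemma mono_mem {h : ℕ} (hh : h ∈ H) : (RatFunc.X : RatFunc K) ^ h ∈ nsRing K H :=
  Algebra.subset_adjoin ⟨h, hh, rfl⟩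

lemma mono_zpow_eq {z α s : ℕ} (he : z = α + s) :
    (RatFunc.X : RatFunc K) ^ z * (RatFunc.X : RatFunc K) ^ (-(α : ℤ)) =
      (RatFunc.X : RatFunc K) ^ s := by
  have hXne : (RatFunc.X : RatFunc K) ≠ 0 := RatFunc.X_ne_zero
  rw [← zpow_natCast (RatFunc.X : RatFunc K) z, ← zpow_natCast (RatFunc.X : RatFunc K) s,
    ← zpow_add₀ hXne]
  congr 1
  omega

lemma omega_mul {z : ℕ} (hz : z ∈ Dset H) {y : RatFunc K} (hy : y ∈ nsOmega K H) :
    (RatFunc.X : RatFunc K) ^ z * y ∈ nsRing K H := by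
  induction hy using Submodule.span_induction with
  | mem x hx =>
    obtain ⟨α, hα, rfl⟩ := hx
    obtain ⟨h', hh', he⟩ := hz α hα
    rw [mono_zpow_eq (by omega : z = α + h')]
    exact mono_mem hh'
  | zero => rw [mul_zero]; exact (nsRing K H).zero_mem
  | add x y hx hy ihx ihy => rw [mul_add]; exact (nsRing K H).add_mem ihx ihy
  | smul r x hx ih =>
    have hre : r • x = (r : RatFunc K) * x := rfl
    have he2 : (RatFunc.X : RatFunc K) ^ z * (r • x) =
        (r : RatFunc K) * ((RatFunc.X : RatFunc K) ^ z * x) := by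
      rw [hre]; ring
    rw [he2]
    exact (nsRing K H).mul_mem r.2 ih

def multHom (z : ℕ) (hz : z ∈ Dset H) :
    ↥(nsOmega K H) →ₗ[↥(nsRing K H)] ↥(nsRing K H) where
  toFun y := ⟨(RatFunc.X : RatFunc K) ^ z * y.1, omega_mul hz y.2⟩
  map_add' y1 y2 := Subtype.ext (by simp [mul_add])
  map_smul' r y := Subtype.ext (by
    show (RatFunc.X : RatFunc K) ^ z * ((r : RatFunc K) * y.1) =
      (r : RatFunc K) * ((RatFunc.X : RatFunc K) ^ z * y.1)
    ring)

lemma Tset_mem_H {s : ℕ} (hs : s ∈ Tset H) : s ∈ H := by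
  obtain ⟨z, hz, γ, hγ, he⟩ := hs
  obtain ⟨h', hh', he2⟩ := hz γ hγ
  have : s = h' := by omega
  exact this ▸ hh'

lemma mono_mem_tr {s : ℕ} (hs : s ∈ Tset H) (x : ↥(nsRing K H))
    (hx : (x : RatFunc K) = (RatFunc.X : RatFunc K) ^ s) : x ∈ trOmega K H := by
  obtain ⟨z, hz, γ, hγ, he⟩ := hs
  have hgen : (RatFunc.X : RatFunc K) ^ (-(γ : ℤ)) ∈ nsOmega K H :=
    Submodule.subset_span ⟨γ, hγ, rfl⟩
  have hxe : x = multHom z hz ⟨_, hgen⟩ := Subtype.ext (by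
    show (x : RatFunc K) = (RatFunc.X : RatFunc K) ^ z * (RatFunc.X : RatFunc K) ^ (-(γ : ℤ))
    rw [hx, mono_zpow_eq (by omega : z = γ + s)])
  rw [hxe]
  exact le_iSup (fun f => LinearMap.range f) (multHom z hz) (LinearMap.mem_range_self _ _)

lemma nsRing_span :
    Subalgebra.toSubmodule (nsRing K H) =
      Submodule.span K {x : RatFunc K | ∃ h ∈ H, x = (RatFunc.X : RatFunc K) ^ h} := by
  rw [nsRing, Algebra.adjoin_eq_span]
  congr 1
  have : {x : RatFunc K | ∃ h ∈ H, x = (RatFunc.X : RatFunc K) ^ h} =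
      ((⟨⟨{x : RatFunc K | ∃ h ∈ H, x = (RatFunc.X : RatFunc K) ^ h},
        fun {a b} ha hb => ?_⟩, ?_⟩ : Submonoid (RatFunc K)) : Set (RatFunc K)) := rfl
  · rw [this, Submonoid.closure_eq]
  · obtain ⟨m, hm, rfl⟩ := ha
    obtain ⟨n, hn, rfl⟩ := hb
    exact ⟨m + n, H.add_mem hm hn, (pow_add _ _ _).symm⟩
  · exact ⟨0, H.zero_mem, (pow_zero _).symm⟩

end Alg

section Alg2
variable {K : Type*} [Field K] {H : AddSubmonoid ℕ}

open Classical in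
def qmono (K : Type*) [Field K] (H : AddSubmonoid ℕ) :
    ℕ → ↥(nsRing K H) ⧸ trOmega K H := fun n =>
  Submodule.Quotient.mk
    (if hn : (RatFunc.X : RatFunc K) ^ n ∈ nsRing K H then (⟨_, hn⟩ : ↥(nsRing K H)) else 0)

lemma qmono_eq {h : ℕ} (hh : h ∈ H) :
    qmono K H h = Submodule.Quotient.mk (⟨_, mono_mem hh⟩ : ↥(nsRing K H)) := by
  rw [qmono, dif_pos (mono_mem hh)]

lemma qmono_mem_span {h : ℕ} (hh : h ∈ H) :
    qmono K H h ∈ Submodule.span K (qmono K H '' Wset H) := by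
  by_cases ht : h ∈ Tset H
  · have : qmono K H h = 0 := by
      rw [qmono_eq hh]
      exact (Submodule.Quotient.mk_eq_zero _).2 (mono_mem_tr ht _ rfl)
    rw [this]; exact Submodule.zero_mem _
  · exact Submodule.subset_span ⟨h, ⟨hh, ht⟩, rfl⟩

lemma qmono_span :
    Submodule.span K (qmono K H '' Wset H) = ⊤ := by
  rw [Submodule.eq_top_iff']
  intro q
  obtain ⟨r, rfl⟩ := Submodule.Quotient.mk_surjective _ q
  set N : Submodule K ↥(nsRing K H) :=
    (Submodule.span K (qmono K H '' Wset H)).comap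
      (((trOmega K H).mkQ).restrictScalars K) with hN
  suffices hr : r ∈ N by exact hr
  have hle : Submodule.span K {x : RatFunc K | ∃ h ∈ H, x = (RatFunc.X : RatFunc K) ^ h} ≤
      N.map (nsRing K H).val.toLinearMap := by
    rw [Submodule.span_le]
    rintro _ ⟨h, hh, rfl⟩
    refine ⟨⟨_, mono_mem hh⟩, Submodule.mem_comap.2 ?_, rfl⟩
    have he : ((trOmega K H).mkQ.restrictScalars K) (⟨_, mono_mem hh⟩ : ↥(nsRing K H)) =
        qmono K H h := by rw [qmono_eq hh]; rfl
    rw [he]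
    exact qmono_mem_span hh
  have hr2 : (r : RatFunc K) ∈ Submodule.span K
      {x : RatFunc K | ∃ h ∈ H, x = (RatFunc.X : RatFunc K) ^ h} := by
    rw [← nsRing_span]
    exact r.2
  obtain ⟨r', hr', hre⟩ := hle hr2
  have : r' = r := Subtype.ext hre
  exact this ▸ hr'

lemma Wset_le_F {F : ℕ} (hF : F ∉ H) (hFmax : ∀ n : ℕ, F < n → n ∈ H) :
    ∀ h ∈ Wset H, h ≤ F := by
  intro h hh
  by_contra hc
  refine hh.2 ⟨h + F, ?_, F, hF, rfl⟩
  intro γ hγ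
  have hγF : γ ≤ F := by
    by_contra hc2; exact hγ (hFmax _ (by omega))
  exact ⟨h + F - γ, hFmax _ (by omega), by omega⟩

theorem length_le (hfin : {n : ℕ | n ∉ H}.Finite) (F : ℕ) (hF : F ∉ H)
    (hFmax : ∀ n : ℕ, F < n → n ∈ H) :
    moduleLength ↥(nsRing K H) (↥(nsRing K H) ⧸ trOmega K H) ≤
      ((Wset H).ncard : WithBot ℕ∞) := by
  classical
  set Q := ↥(nsRing K H) ⧸ trOmega K H with hQ
  have hWfin : (Wset H).Finite := (Set.finite_Iic F).subset (Wset_le_F hF hFmax)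
  haveI hfd : Module.Finite K Q :=
    Module.finite_def.2 (Submodule.fg_def.2 ⟨_, hWfin.image (qmono K H), qmono_span⟩)
  have hfr : Module.finrank K Q ≤ (Wset H).ncard := by
    haveI := (hWfin.image (qmono K H)).fintype
    have h1 : Module.finrank K Q = Module.finrank K (⊤ : Submodule K Q) :=
      (finrank_top K Q).symm
    rw [h1, ← qmono_span]
    refine le_trans (finrank_span_le_card _) ?_
    rw [← Set.ncard_eq_toFinset_card']
    exact Set.ncard_image_le hWfin
  have hkd : Order.krullDim (Submodule ↥(nsRing K H) Q) ≤ Order.krullDim (Submodule K Q) :=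
    Order.krullDim_le_of_strictMono (Submodule.restrictScalars K)
      (Monotone.strictMono_of_injective (fun p q hpq x hx => hpq hx)
        (Submodule.restrictScalars_injective K _ _))
  have hkd2 : Order.krullDim (Submodule K Q) ≤ ((Wset H).ncard : WithBot ℕ∞) := by
    show (⨆ (p : LTSeries (Submodule K Q)), (p.length : WithBot ℕ∞)) ≤ _
    refine iSup_le fun p => ?_
    have key : ∀ n : ℕ, ∀ hn : n ≤ p.length,
        n ≤ Module.finrank K (p.toFun ⟨n, by omega⟩) := by
      intro n
      induction n with
      | zero => intro _; exact Nat.zero_le _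
      | succ m ih =>
        intro hm
        have h1 := ih (by omega)
        have h2 : p.toFun ⟨m, by omega⟩ < p.toFun ⟨m + 1, by omega⟩ := p.step ⟨m, by omega⟩
        have h3 := Submodule.finrank_lt_finrank_of_lt h2
        omega
    have h3 := key p.length (le_refl _)
    have h4 : Module.finrank K (p.toFun ⟨p.length, by omega⟩) ≤ Module.finrank K Q :=
      Submodule.finrank_le _
    have h5 : p.length ≤ (Wset H).ncard := by omega
    exact_mod_cast h5
  exact le_trans hkd hkd2

end Alg2

/-- If the Cohen-Macaulay type of `R = K[H]` is at most `3`
(i.e. `|PF(H)| ≤ 3`), then `ℓ_R(R/tr_R(ω_R)) ≤ g(H) − n(H)`, stated as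
`ℓ_R(R/tr_R(ω_R)) + n(H) ≤ g(H)`. -/
theorem length_trace_le_of_type_le_three
    (K : Type*) [Field K] (H : AddSubmonoid ℕ) (hfin : {n : ℕ | n ∉ H}.Finite)
    (F : ℕ) (hF : F ∉ H) (hFmax : ∀ n : ℕ, F < n → n ∈ H)
    (htype : (PF H).ncard ≤ 3) :
    moduleLength ↥(nsRing K H) (↥(nsRing K H) ⧸ trOmega K H)
        + ({h : ℕ | h ∈ H ∧ h < F}.ncard : WithBot ℕ∞) ≤
      ({n : ℕ | n ∉ H}.ncard : WithBot ℕ∞) := by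
  have hcomb := comb_main (H := H) hfin hF hFmax htype
  have hlen := length_le (K := K) (H := H) hfin F hF hFmax
  have final : ∀ (x : WithBot ℕ∞) (a b c : ℕ), x ≤ (a : WithBot ℕ∞) → a + b ≤ c →
      x + (b : WithBot ℕ∞) ≤ (c : WithBot ℕ∞) := by
    intro x a b c h1 h2
    calc x + (b : WithBot ℕ∞) ≤ (a : WithBot ℕ∞) + b := by gcongr
      _ = ((a + b : ℕ) : WithBot ℕ∞) := by push_cast; ring
      _ ≤ _ := by exact_mod_cast h2
  exact final _ _ _ _ hlen hcomb
end
end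

section
/- For the numerical semigroup H = ⟨13, 14, 15, 16, 17, 18, 21, 23⟩ and R = K[H], the trace of the canonical module satisfies tr_R(ω_R) = R : K[t] = t^{26}·K[t], and consequently g(H) = 17, n(H) = 9, and ℓ_R(R/tr_R(ω_R)) = 9 > 8 = g(H) − n(H). -/
set_option synthInstance.maxHeartbeats 1000000
set_option maxHeartbeats 2000000

noncomputable section

open Polynomial

/-- The image of `K[t]` (= the integral closure of `K[H]`) inside `K(t)`, as an
`R`-submodule. -/
def nsKt (K : Type*) [Field K] (H : AddSubmonoid ℕ) : Submodule ↥(nsRing K H) (RatFunc K) :=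
  Submodule.span ↥(nsRing K H) (Set.range (algebraMap (Polynomial K) (RatFunc K)))

/-- The conductor `R : K[t]`, as an ideal of `R = K[H]`. -/
def nsConductor (K : Type*) [Field K] (H : AddSubmonoid ℕ) : Ideal ↥(nsRing K H) :=
  (((1 : Submodule ↥(nsRing K H) (RatFunc K)) / nsKt K H)).comap
    (Algebra.linearMap ↥(nsRing K H) (RatFunc K))

/-- The numerical semigroup `H = ⟨13, 14, 15, 16, 17, 18, 21, 23⟩`. -/
def H5 : AddSubmonoid ℕ := AddSubmonoid.closure {13, 14, 15, 16, 17, 18, 21, 23}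


namespace TrEx
variable {K : Type*} [Field K]


def HP (n : ℕ) : Prop := n = 0 ∨ (13 ≤ n ∧ n ≤ 18) ∨ n = 21 ∨ n = 23 ∨ 26 ≤ n

def M5 : AddSubmonoid ℕ where
  carrier := {n | HP n}
  zero_mem' := Or.inl rfl
  add_mem' := by
    rintro a b ha hb
    rcases eq_or_ne a 0 with rfl | ha0
    · simpa using hb
    rcases eq_or_ne b 0 with rfl | hb0
    · simpa using ha
    have h13a : 13 ≤ a := by rcases ha with h|h|h|h|h <;> omega
    have h13b : 13 ≤ b := by rcases hb with h|h|h|h|h <;> omega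
    right; right; right; right; omega

lemma gmem {n : ℕ} (h : n ∈ ({13, 14, 15, 16, 17, 18, 21, 23} : Set ℕ)) : n ∈ H5 :=
  AddSubmonoid.subset_closure h

lemma ge26_mem : ∀ n : ℕ, 26 ≤ n → n ∈ H5 := by
  intro n
  induction n using Nat.strong_induction_on with
  | _ n ih =>
    intro h26
    by_cases h : n ≤ 38
    · have g13 : (13:ℕ) ∈ H5 := gmem (by norm_num)
      have g14 : (14:ℕ) ∈ H5 := gmem (by norm_num)
      have g15 : (15:ℕ) ∈ H5 := gmem (by norm_num)
      have g16 : (16:ℕ) ∈ H5 := gmem (by norm_num)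
      have g17 : (17:ℕ) ∈ H5 := gmem (by norm_num)
      have g18 : (18:ℕ) ∈ H5 := gmem (by norm_num)
      have g23 : (23:ℕ) ∈ H5 := gmem (by norm_num)
      interval_cases n
      · exact add_mem g13 g13
      · exact add_mem g13 g14
      · exact add_mem g13 g15
      · exact add_mem g13 g16
      · exact add_mem g13 g17
      · exact add_mem g13 g18
      · exact add_mem g14 g18
      · exact add_mem g15 g18
      · exact add_mem g16 g18
      · exact add_mem g17 g18
      · exact add_mem g18 g18
      · exact add_mem g14 g23
      · exact add_mem g15 g23
    · have : n - 13 ∈ H5 := ih (n - 13) (by omega) (by omega)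
      have : (n - 13) + 13 ∈ H5 := add_mem this (gmem (by norm_num))
      simpa [Nat.sub_add_cancel (by omega : 13 ≤ n)] using this

lemma memH5 (n : ℕ) : n ∈ H5 ↔ HP n := by
  constructor
  · intro hn
    have : H5 ≤ M5 := by
      rw [H5, AddSubmonoid.closure_le]
      intro x hx
      simp only [Set.mem_insert_iff, Set.mem_singleton_iff] at hx
      show HP x
      unfold HP; omega
    exact this hn
  · rintro (rfl | ⟨h1, h2⟩ | rfl | rfl | h)
    · exact zero_mem _
    · interval_cases n <;> exact gmem (by norm_num)
    · exact gmem (by norm_num)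
    · exact gmem (by norm_num)
    · exact ge26_mem n h

def gapsF : Finset ℕ := {1,2,3,4,5,6,7,8,9,10,11,12,19,20,22,24,25}

lemma gaps_eq : {n : ℕ | n ∉ H5} = ↑gapsF := by
  ext n
  simp only [Set.mem_setOf_eq, memH5, HP, gapsF, Finset.coe_insert, Set.mem_insert_iff,
    Finset.coe_singleton, Set.mem_singleton_iff]
  omega

lemma gaps_ncard : {n : ℕ | n ∉ H5}.ncard = 17 := by
  rw [gaps_eq, Set.ncard_coe_finset]; rfl

lemma frob_eq : sSup {n : ℕ | n ∉ H5} = 25 := by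
  apply IsGreatest.csSup_eq
  constructor
  · simp only [Set.mem_setOf_eq, memH5, HP]; omega
  · intro n hn
    simp only [Set.mem_setOf_eq, memH5, HP] at hn
    omega

lemma nH_ncard : {h : ℕ | h ∈ H5 ∧ h < sSup {n : ℕ | n ∉ H5}}.ncard = 9 := by
  rw [frob_eq]
  have : {h : ℕ | h ∈ H5 ∧ h < 25} = ↑({0,13,14,15,16,17,18,21,23} : Finset ℕ) := by
    ext n
    simp only [Set.mem_setOf_eq, memH5, HP, Finset.coe_insert, Set.mem_insert_iff,
      Finset.coe_singleton, Set.mem_singleton_iff]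
    omega
  rw [this, Set.ncard_coe_finset]; rfl



noncomputable def φ : Polynomial K →ₐ[K] RatFunc K :=
  IsScalarTower.toAlgHom K (Polynomial K) (RatFunc K)

lemma φ_apply (p : Polynomial K) : φ p = algebraMap (Polynomial K) (RatFunc K) p := rfl

lemma φ_X : (φ (X : Polynomial K)) = RatFunc.X := RatFunc.algebraMap_X

lemma φ_inj : Function.Injective (φ (K := K)) := RatFunc.algebraMap_injective K

def HA (H : AddSubmonoid ℕ) : Subalgebra K (Polynomial K) where
  carrier := {p | ∀ i, p.coeff i ≠ 0 → i ∈ H}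
  add_mem' := by
    intro p q hp hq i hi
    rw [coeff_add] at hi
    by_cases h : p.coeff i = 0
    · exact hq i (by simpa [h] using hi)
    · exact hp i h
  mul_mem' := by
    intro p q hp hq n hn
    rw [coeff_mul] at hn
    obtain ⟨⟨a, b⟩, hab, h0⟩ := Finset.exists_ne_zero_of_sum_ne_zero hn
    rw [Finset.HasAntidiagonal.mem_antidiagonal] at hab
    have ha : p.coeff a ≠ 0 := fun h => h0 (by simp [h])
    have hb : q.coeff b ≠ 0 := fun h => h0 (by simp [h])
    rw [← hab]
    exact add_mem (hp a ha) (hq b hb)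
  algebraMap_mem' := by
    intro c i hi
    rw [Polynomial.algebraMap_eq, coeff_C] at hi
    have h0 : i = 0 := by by_contra h; simp [h] at hi
    rw [h0]; exact zero_mem _

lemma mem_nsRing {H : AddSubmonoid ℕ} {x : RatFunc K} :
    x ∈ nsRing K H ↔ ∃ p : Polynomial K, (∀ i, p.coeff i ≠ 0 → i ∈ H) ∧ x = φ p := by
  constructor
  · intro hx
    have hle : nsRing K H ≤ (HA H).map φ := by
      rw [nsRing]
      apply Algebra.adjoin_le
      rintro y ⟨h, hh, rfl⟩
      refine ⟨X ^ h, ?_, by simp [map_pow, φ_X]⟩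
      intro i hi
      rw [coeff_X_pow] at hi
      have : i = h := by by_contra hc; simp [hc] at hi
      rwa [this]
    obtain ⟨p, hp, hpx⟩ := hle hx
    exact ⟨p, hp, hpx.symm⟩
  · rintro ⟨p, hp, rfl⟩
    have : p = ∑ i ∈ p.support, monomial i (p.coeff i) := p.as_sum_support
    rw [this]
    rw [map_sum]
    apply Subalgebra.sum_mem
    intro i hi
    rw [← C_mul_X_pow_eq_monomial, map_mul, map_pow, φ_X]
    have hC : φ (C (p.coeff i) : Polynomial K) = algebraMap K (RatFunc K) (p.coeff i) := by
      rw [← Polynomial.algebraMap_eq]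
      exact φ.commutes _
    rw [hC]
    have hiH : i ∈ H := hp i (by simpa using hi)
    exact mul_mem (Subalgebra.algebraMap_mem _ _) (Algebra.subset_adjoin ⟨i, hiH, rfl⟩)

lemma X_pow_mem {H : AddSubmonoid ℕ} {n : ℕ} (hn : n ∈ H) :
    (RatFunc.X : RatFunc K) ^ n ∈ nsRing K H :=
  Algebra.subset_adjoin ⟨n, hn, rfl⟩


-- Stage C: the subring facts

lemma smul_eq (r : ↥(nsRing K H5)) (x : RatFunc K) : r • x = ↑r * x := rfl

lemma mem_one_iff {x : RatFunc K} :
    x ∈ (1 : Submodule ↥(nsRing K H5) (RatFunc K)) ↔ x ∈ nsRing K H5 := by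
  rw [Submodule.mem_one]
  constructor
  · rintro ⟨y, rfl⟩; exact y.2
  · intro hx; exact ⟨⟨x, hx⟩, rfl⟩

lemma coe_mem_nsRing (r : ↥(nsRing K H5)) :
    ∃ p : Polynomial K, (∀ i, p.coeff i ≠ 0 → i ∈ H5) ∧ (r : RatFunc K) = φ p :=
  mem_nsRing.mp r.2

/-- The image of `K[t]` as a bundled `R`-submodule. -/
def KtSub : Submodule ↥(nsRing K H5) (RatFunc K) where
  carrier := Set.range (φ (K := K))
  add_mem' := by rintro a b ⟨p, rfl⟩ ⟨q, rfl⟩; exact ⟨p + q, map_add _ _ _⟩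
  zero_mem' := ⟨0, map_zero _⟩
  smul_mem' := by
    rintro r x ⟨p, rfl⟩
    obtain ⟨q, hq, hrq⟩ := coe_mem_nsRing r
    exact ⟨q * p, by rw [map_mul, ← hrq, smul_eq]⟩

lemma nsKt_eq : nsKt K H5 = (KtSub : Submodule ↥(nsRing K H5) (RatFunc K)) := by
  have hs : Set.range (algebraMap (Polynomial K) (RatFunc K)) = (KtSub (K := K) : Set (RatFunc K)) := rfl
  rw [nsKt, hs, Submodule.span_eq]

lemma mem_nsKt {x : RatFunc K} : x ∈ nsKt K H5 ↔ ∃ p : Polynomial K, x = φ p := by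
  rw [nsKt_eq]
  constructor
  · rintro ⟨p, rfl⟩; exact ⟨p, rfl⟩
  · rintro ⟨p, rfl⟩; exact ⟨p, rfl⟩

/-- `t^26 K[t]` as a bundled `R`-submodule. -/
def C26 : Submodule ↥(nsRing K H5) (RatFunc K) where
  carrier := {x | ∃ p : Polynomial K, x = (RatFunc.X : RatFunc K) ^ 26 * φ p}
  add_mem' := by
    rintro a b ⟨p, rfl⟩ ⟨q, rfl⟩
    exact ⟨p + q, by rw [map_add, mul_add]⟩
  zero_mem' := ⟨0, by simp⟩
  smul_mem' := by
    rintro r x ⟨p, rfl⟩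
    obtain ⟨q, hq, hrq⟩ := coe_mem_nsRing r
    refine ⟨q * p, ?_⟩
    rw [smul_eq, hrq, map_mul]; ring

lemma X_pow_φ (n : ℕ) : (RatFunc.X : RatFunc K) ^ n = φ (X ^ n : Polynomial K) := by
  rw [map_pow, φ_X]

lemma supp_ge26_mem {p : Polynomial K} (hp : ∀ i, p.coeff i ≠ 0 → 26 ≤ i) :
    φ p ∈ nsRing K H5 :=
  mem_nsRing.mpr ⟨p, fun i hi => (memH5 i).mpr (Or.inr (Or.inr (Or.inr (Or.inr (hp i hi))))), rfl⟩

lemma coeff_X26_mul (p : Polynomial K) (i : ℕ) (hi : ((X:Polynomial K) ^ 26 * p).coeff i ≠ 0) :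
    26 ≤ i := by
  by_contra h
  exact hi (Polynomial.X_pow_dvd_iff.mp (dvd_mul_right _ p) i (by omega))

lemma div_nsKt_eq : (1 : Submodule ↥(nsRing K H5) (RatFunc K)) / nsKt K H5 = C26 := by
  apply le_antisymm
  · intro x hx
    rw [Submodule.mem_div_iff_forall_mul_mem] at hx
    have h1 : x * φ (1 : Polynomial K) ∈ (1 : Submodule ↥(nsRing K H5) (RatFunc K)) :=
      hx _ (mem_nsKt.mpr ⟨1, rfl⟩)
    rw [map_one, mul_one] at h1
    obtain ⟨p, hp, rfl⟩ := mem_nsRing.mp (mem_one_iff.mp h1)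
    have key : ∀ i, p.coeff i ≠ 0 → 26 ≤ i := by
      intro i hi
      by_contra h
      have hn : φ p * φ ((X:Polynomial K) ^ (25 - i)) ∈ (1 : Submodule ↥(nsRing K H5) (RatFunc K)) :=
        hx _ (mem_nsKt.mpr ⟨_, rfl⟩)
      rw [← map_mul] at hn
      obtain ⟨q, hq, hqe⟩ := mem_nsRing.mp (mem_one_iff.mp hn)
      have : q = p * X ^ (25 - i) := φ_inj hqe.symm
      subst this
      have h25 : (25 : ℕ) ∈ H5 := by
        have := hq 25 (by
          rw [Polynomial.coeff_mul_X_pow' p (25 - i) 25]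
          simp only [if_pos (by omega : 25 - i ≤ 25)]
          have : 25 - (25 - i) = i := by omega
          rw [this]; exact hi)
        exact this
      rw [memH5] at h25
      unfold HP at h25
      omega
    obtain ⟨p', hp'⟩ := (Polynomial.X_pow_dvd_iff (n := 26) (f := p)).mpr
      (fun d hd => by by_contra hc; exact absurd (key d hc) (by omega))
    exact ⟨p', by rw [hp', map_mul, X_pow_φ]⟩
  · intro x hx
    obtain ⟨p, rfl⟩ := hx
    rw [Submodule.mem_div_iff_forall_mul_mem]
    intro y hy
    obtain ⟨q, rfl⟩ := mem_nsKt.mp hy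
    rw [mem_one_iff, X_pow_φ, ← map_mul, ← map_mul]
    apply supp_ge26_mem
    intro i hi
    rw [mul_assoc] at hi
    exact coeff_X26_mul _ i hi

/-- The ideal of elements supported in degrees `≥ 26`. -/
def J26 : Ideal ↥(nsRing K H5) where
  carrier := {r | ∃ p : Polynomial K, (∀ i, p.coeff i ≠ 0 → 26 ≤ i) ∧ (r : RatFunc K) = φ p}
  add_mem' := by
    rintro a b ⟨p, hp, hpe⟩ ⟨q, hq, hqe⟩
    refine ⟨p + q, fun i hi => ?_, by push_cast [hpe, hqe]; rw [map_add]⟩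
    rw [coeff_add] at hi
    by_cases h : p.coeff i = 0
    · exact hq i (by simpa [h] using hi)
    · exact hp i h
  zero_mem' := ⟨0, by simp, by simp⟩
  smul_mem' := by
    rintro r a ⟨p, hp, hpe⟩
    obtain ⟨q, hq, hrq⟩ := coe_mem_nsRing r
    refine ⟨q * p, fun n hn => ?_, by push_cast [smul_eq_mul, hpe, hrq]; rw [map_mul]⟩
    rw [coeff_mul] at hn
    obtain ⟨⟨u, v⟩, huv, h0⟩ := Finset.exists_ne_zero_of_sum_ne_zero hn
    rw [Finset.HasAntidiagonal.mem_antidiagonal] at huv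
    have hv : p.coeff v ≠ 0 := fun h => h0 (by simp [h])
    have := hp v hv
    omega

lemma mem_J26 {r : ↥(nsRing K H5)} :
    r ∈ J26 (K := K) ↔ ∃ p : Polynomial K, (∀ i, p.coeff i ≠ 0 → 26 ≤ i) ∧ (r : RatFunc K) = φ p :=
  Iff.rfl

lemma conductor_eq : nsConductor K H5 = J26 := by
  ext r
  rw [nsConductor, Submodule.mem_comap, div_nsKt_eq]
  have : Algebra.linearMap ↥(nsRing K H5) (RatFunc K) r = (r : RatFunc K) := rfl
  rw [this]
  constructor
  · rintro ⟨p, hp⟩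
    exact mem_J26.mpr ⟨X ^ 26 * p, coeff_X26_mul p, by rw [map_mul, ← X_pow_φ, hp]⟩
  · rintro ⟨p, hp, hpe⟩
    obtain ⟨p', rfl⟩ := (Polynomial.X_pow_dvd_iff (n := 26) (f := p)).mpr
      (fun d hd => by by_contra hc; exact absurd (hp d hc) (by omega))
    exact ⟨p', by rw [hpe, map_mul, X_pow_φ]⟩

-- Stage D: the trace ideal

lemma gap_le25 {α : ℕ} (hα : α ∉ H5) : 1 ≤ α ∧ α ≤ 25 := by
  rw [memH5] at hα; unfold HP at hα; omega

lemma mem_omega_gen {α : ℕ} (hα : α ∉ H5) :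
    (RatFunc.X : RatFunc K) ^ (-(α:ℤ)) ∈ nsOmega K H5 :=
  Submodule.subset_span ⟨α, hα, rfl⟩

lemma Xz (a : ℕ) (b : ℤ) : (RatFunc.X : RatFunc K) ^ a * (RatFunc.X : RatFunc K) ^ b
    = (RatFunc.X : RatFunc K) ^ ((a:ℤ) + b) := by
  rw [← zpow_natCast (RatFunc.X : RatFunc K) a, ← zpow_add₀ (RatFunc.X_ne_zero (K := K))]

lemma gap_bound {j : ℕ}
    (h : ∀ α : ℕ, α ∉ H5 → (α - 1 ≤ j ∧ j - (α - 1) ∈ H5)) : 50 ≤ j := by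
  have h' : ∀ α : ℕ, ¬ HP α → (α - 1 ≤ j ∧ HP (j - (α - 1))) := by
    intro α hα
    obtain ⟨h1, h2⟩ := h α (fun hm => hα ((memH5 α).mp hm))
    exact ⟨h1, (memH5 _).mp h2⟩
  have k1 := h' 1 (by unfold HP; omega)
  have k2 := h' 2 (by unfold HP; omega)
  have k3 := h' 3 (by unfold HP; omega)
  have k4 := h' 4 (by unfold HP; omega)
  have k5 := h' 5 (by unfold HP; omega)
  have k6 := h' 6 (by unfold HP; omega)
  have k7 := h' 7 (by unfold HP; omega)
  have k8 := h' 8 (by unfold HP; omega)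
  have k9 := h' 9 (by unfold HP; omega)
  have k10 := h' 10 (by unfold HP; omega)
  have k11 := h' 11 (by unfold HP; omega)
  have k12 := h' 12 (by unfold HP; omega)
  have k19 := h' 19 (by unfold HP; omega)
  have k20 := h' 20 (by unfold HP; omega)
  have k22 := h' 22 (by unfold HP; omega)
  have k24 := h' 24 (by unfold HP; omega)
  have k25 := h' 25 (by unfold HP; omega)
  unfold HP at k1 k2 k3 k4 k5 k6 k7 k8 k9 k10 k11 k12 k19 k20 k22 k24 k25
  omega

lemma mem26 {n : ℕ} (hn : 26 ≤ n) : n ∈ H5 := ge26_mem n hn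

lemma mul_big_mem {m : ℕ} (hm : 51 ≤ m) :
    ∀ x ∈ nsOmega K H5, (RatFunc.X : RatFunc K) ^ m * x ∈ nsRing K H5 := by
  intro x hx
  induction hx using Submodule.span_induction with
  | mem x hxs =>
    obtain ⟨α, hα, rfl⟩ := hxs
    obtain ⟨hα1, hα25⟩ := gap_le25 hα
    rw [Xz]
    have he : (m:ℤ) + (-(α:ℤ)) = ((m - α : ℕ) : ℤ) := by omega
    rw [he, zpow_natCast]
    exact X_pow_mem (mem26 (by omega))
  | zero => rw [mul_zero]; exact zero_mem _
  | add x y hx hy ihx ihy => rw [mul_add]; exact add_mem ihx ihy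
  | smul r x hx ih =>
    rw [smul_eq r x, show (RatFunc.X : RatFunc K) ^ m * ((r:RatFunc K) * x)
      = (r:RatFunc K) * ((RatFunc.X : RatFunc K) ^ m * x) by ring]
    exact mul_mem r.2 ih

/-- Multiplication by `X^m` as a map `ω → R`, for `m ≥ 51`. -/
noncomputable def mulMap (m : ℕ) (hm : 51 ≤ m) :
    ↥(nsOmega K H5) →ₗ[↥(nsRing K H5)] ↥(nsRing K H5) where
  toFun y := ⟨(RatFunc.X : RatFunc K) ^ m * ↑y, mul_big_mem hm _ y.2⟩
  map_add' a b := by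
    apply Subtype.ext
    simp [mul_add]
  map_smul' r a := by
    apply Subtype.ext
    show (RatFunc.X : RatFunc K) ^ m * ((r • a : ↥(nsOmega K H5)) : RatFunc K)
        = ((r * ⟨_, _⟩ : ↥(nsRing K H5)) : RatFunc K)
    rw [SetLike.val_smul, smul_eq, MulMemClass.coe_mul]
    ring

lemma X_pow_mem_tr {n : ℕ} (hn : 26 ≤ n) (h : (RatFunc.X : RatFunc K) ^ n ∈ nsRing K H5) :
    (⟨(RatFunc.X : RatFunc K) ^ n, h⟩ : ↥(nsRing K H5)) ∈ trOmega K H5 := by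
  have h25 : (25:ℕ) ∉ H5 := by rw [memH5]; unfold HP; omega
  have hle := le_iSup (fun f : ↥(nsOmega K H5) →ₗ[↥(nsRing K H5)] ↥(nsRing K H5) =>
    LinearMap.range f) (mulMap (n + 25) (by omega))
  apply hle
  refine ⟨⟨_, mem_omega_gen h25⟩, ?_⟩
  apply Subtype.ext
  show (RatFunc.X : RatFunc K) ^ (n + 25) * (RatFunc.X : RatFunc K) ^ (-(25:ℤ):ℤ)
      = (RatFunc.X : RatFunc K) ^ n
  rw [Xz]
  have he : ((n + 25 : ℕ):ℤ) + (-(25:ℤ)) = ((n:ℕ):ℤ) := by omega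
  rw [he]
  exact zpow_natCast _ n

lemma J26_le_tr : (J26 : Ideal ↥(nsRing K H5)) ≤ trOmega K H5 := by
  classical
  rintro r ⟨p, hp, hpe⟩
  have hXmem : ∀ i, 26 ≤ i → (RatFunc.X : RatFunc K) ^ i ∈ nsRing K H5 :=
    fun i hi => X_pow_mem (mem26 hi)
  have hgi : ∀ i : ℕ, p.coeff i ≠ 0 → 26 ≤ i := hp
  have hre : r = ∑ i ∈ p.support.attach,
      algebraMap K ↥(nsRing K H5) (p.coeff i.1) *
        ⟨_, hXmem i.1 (hgi i.1 (Polynomial.mem_support_iff.mp i.2))⟩ := by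
    apply Subtype.ext
    rw [AddSubmonoidClass.coe_finset_sum]
    have : ∀ i ∈ p.support.attach,
        ((algebraMap K ↥(nsRing K H5) (p.coeff i.1) *
          (⟨_, hXmem i.1 (hgi i.1 (Polynomial.mem_support_iff.mp i.2))⟩ : ↥(nsRing K H5))
            : ↥(nsRing K H5)) : RatFunc K)
        = algebraMap K (RatFunc K) (p.coeff i.1) * (RatFunc.X : RatFunc K) ^ (i.1 : ℕ) := by
      intro i _
      rw [MulMemClass.coe_mul]
      rfl
    rw [Finset.sum_congr rfl this, hpe]
    conv_lhs => rw [p.as_sum_support]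
    rw [map_sum, ← Finset.sum_attach p.support
      (fun i => φ (Polynomial.monomial i (p.coeff i)))]
    apply Finset.sum_congr rfl
    intro i _
    rw [← Polynomial.C_mul_X_pow_eq_monomial, map_mul, map_pow, φ_X]
    congr 1
    all_goals (rw [← Polynomial.algebraMap_eq]; exact φ.commutes _)
  rw [hre]
  apply sum_mem
  intro i _
  exact Ideal.mul_mem_left _ _
    (X_pow_mem_tr (hgi i.1 (Polynomial.mem_support_iff.mp i.2)) _)

lemma supp_mul_ge {q s : Polynomial K} (hq : ∀ j, q.coeff j ≠ 0 → 50 ≤ j) :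
    ∀ m, (q * s).coeff m ≠ 0 → 50 ≤ m := by
  intro m hm
  rw [Polynomial.coeff_mul] at hm
  obtain ⟨⟨u, v⟩, huv, h0⟩ := Finset.exists_ne_zero_of_sum_ne_zero hm
  rw [Finset.HasAntidiagonal.mem_antidiagonal] at huv
  have hu : q.coeff u ≠ 0 := fun h => h0 (by simp [h])
  have := hq u hu
  omega

lemma omega_sub : ∀ x ∈ nsOmega K H5, ∃ s : Polynomial K,
    x = (RatFunc.X : RatFunc K) ^ (-(25:ℤ)) * φ s := by
  intro x hx
  induction hx using Submodule.span_induction with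
  | mem x hxs =>
    obtain ⟨α, hα, rfl⟩ := hxs
    obtain ⟨hα1, hα25⟩ := gap_le25 hα
    refine ⟨X ^ (25 - α), ?_⟩
    rw [← X_pow_φ, show (RatFunc.X : RatFunc K) ^ (-(25:ℤ)) * (RatFunc.X : RatFunc K) ^ (25 - α)
      = (RatFunc.X : RatFunc K) ^ (25 - α) * (RatFunc.X : RatFunc K) ^ (-(25:ℤ)) from mul_comm _ _,
      Xz]
    congr 1
    omega
  | zero => exact ⟨0, by simp⟩
  | add x y hx hy ihx ihy =>
    obtain ⟨s, rfl⟩ := ihx; obtain ⟨s', rfl⟩ := ihy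
    exact ⟨s + s', by rw [map_add, mul_add]⟩
  | smul r x hx ih =>
    obtain ⟨s, rfl⟩ := ih
    obtain ⟨pr, hpr, hpre⟩ := coe_mem_nsRing r
    refine ⟨pr * s, ?_⟩
    rw [smul_eq, hpre, map_mul]
    ring

lemma tr_le_J26 : trOmega K H5 ≤ (J26 : Ideal ↥(nsRing K H5)) := by
  rw [trOmega]
  apply iSup_le
  intro f
  rintro _ ⟨y, rfl⟩
  have h1 : (1:ℕ) ∉ H5 := by rw [memH5]; unfold HP; omega
  obtain ⟨q, hq, hqe⟩ := coe_mem_nsRing (f ⟨_, mem_omega_gen h1⟩)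
  -- the master relation, for each gap α
  have rel : ∀ α : ℕ, ∀ hα : α ∉ H5, ∃ pα : Polynomial K,
      (∀ i, pα.coeff i ≠ 0 → i ∈ H5) ∧
      ((f ⟨_, mem_omega_gen hα⟩ : ↥(nsRing K H5)) : RatFunc K) = φ pα ∧
      (X : Polynomial K) ^ (53 - α) * q = X ^ 52 * pα := by
    intro α hα
    obtain ⟨hα1, hα25⟩ := gap_le25 hα
    obtain ⟨pα, hpα, hpαe⟩ := coe_mem_nsRing (f ⟨_, mem_omega_gen hα⟩)
    refine ⟨pα, hpα, hpαe, ?_⟩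
    have hr : (⟨_, X_pow_mem (mem26 (show 26 ≤ 53 - α by omega))⟩ : ↥(nsRing K H5))
          • (⟨_, mem_omega_gen h1⟩ : ↥(nsOmega K H5))
        = (⟨_, X_pow_mem (mem26 (show (26:ℕ) ≤ 52 by omega))⟩ : ↥(nsRing K H5))
          • (⟨_, mem_omega_gen hα⟩ : ↥(nsOmega K H5)) := by
      apply Subtype.ext
      show (RatFunc.X : RatFunc K) ^ (53 - α) * (RatFunc.X : RatFunc K) ^ (-(1:ℕ):ℤ)
          = (RatFunc.X : RatFunc K) ^ 52 * (RatFunc.X : RatFunc K) ^ (-(α:ℤ))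
      rw [Xz, Xz]
      congr 1
      omega
    have hfr := congrArg f hr
    rw [map_smul, map_smul] at hfr
    have hco := congrArg (Subtype.val) hfr
    simp only [SetLike.val_smul, smul_eq_mul, MulMemClass.coe_mul] at hco
    rw [hqe, hpαe] at hco
    apply φ_inj
    rw [map_mul, map_mul, ← X_pow_φ, ← X_pow_φ]
    exact hco
  -- q is supported in degrees ≥ 50
  have hq50 : ∀ j, q.coeff j ≠ 0 → 50 ≤ j := by
    intro j hj
    apply gap_bound
    intro α hα
    obtain ⟨hα1, hα25⟩ := gap_le25 hα
    obtain ⟨pα, hpα, _, hpoly⟩ := rel α hα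
    have hc := congrArg (fun r => Polynomial.coeff r (j + (53 - α))) hpoly
    rw [Polynomial.coeff_X_pow_mul q (53 - α) j] at hc
    rw [Polynomial.coeff_X_pow_mul' pα 52 (j + (53 - α))] at hc
    by_cases hd : 52 ≤ j + (53 - α)
    · rw [if_pos hd] at hc
      have hne : pα.coeff (j + (53 - α) - 52) ≠ 0 := by rw [← hc]; exact hj
      have hmem := hpα _ hne
      have hidx : j + (53 - α) - 52 = j - (α - 1) := by omega
      constructor
      · omega
      · rwa [hidx] at hmem
    · rw [if_neg hd] at hc
      exact absurd hc hj
  -- the map f is multiplication by X * φ q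
  have main : ∀ x, ∀ hx : x ∈ nsOmega K H5,
      ((f ⟨x, hx⟩ : ↥(nsRing K H5)) : RatFunc K) = RatFunc.X * φ q * x := by
    intro x hx
    induction hx using Submodule.span_induction with
    | mem x hxs =>
      obtain ⟨α, hα, rfl⟩ := hxs
      obtain ⟨hα1, hα25⟩ := gap_le25 hα
      obtain ⟨pα, hpα, hpαe, hpoly⟩ := rel α hα
      have hXne : (RatFunc.X : RatFunc K) ^ (52:ℕ) ≠ 0 :=
        pow_ne_zero _ (RatFunc.X_ne_zero (K := K))
      have rhs : (RatFunc.X : RatFunc K) ^ (52:ℕ)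
            * (RatFunc.X * φ q * (RatFunc.X : RatFunc K) ^ (-(α:ℤ)))
          = (RatFunc.X : RatFunc K) ^ (53 - α) * φ q := by
        rw [show (RatFunc.X : RatFunc K) ^ (52:ℕ)
            * (RatFunc.X * φ q * (RatFunc.X : RatFunc K) ^ (-(α:ℤ)))
          = ((RatFunc.X : RatFunc K) ^ (53:ℕ) * (RatFunc.X : RatFunc K) ^ (-(α:ℤ))) * φ q
          by ring, Xz, show ((53:ℕ):ℤ) + -(α:ℤ) = (((53 - α : ℕ)):ℤ) by omega, zpow_natCast]
      have lhs : (RatFunc.X : RatFunc K) ^ (52:ℕ) * φ pα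
          = (RatFunc.X : RatFunc K) ^ (53 - α) * φ q := by
        rw [X_pow_φ 52, X_pow_φ (53 - α), ← map_mul, ← map_mul, hpoly]
      have key := lhs.trans rhs.symm
      have := mul_left_cancel₀ hXne key
      rw [hpαe, this]
    | zero =>
      have h0 : (⟨0, (nsOmega K H5).zero_mem⟩ : ↥(nsOmega K H5)) = 0 := rfl
      rw [h0, map_zero]
      simp
    | add x y hx hy ihx ihy =>
      have hsum : (⟨x + y, add_mem hx hy⟩ : ↥(nsOmega K H5)) = ⟨x, hx⟩ + ⟨y, hy⟩ := rfl
      rw [hsum, map_add]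
      push_cast [AddMemClass.coe_add]
      rw [ihx, ihy]
      ring
    | smul r x hx ih =>
      have hsm : (⟨r • x, Submodule.smul_mem _ r hx⟩ : ↥(nsOmega K H5)) = r • ⟨x, hx⟩ := rfl
      rw [hsm, map_smul]
      have : ((r • f ⟨x, hx⟩ : ↥(nsRing K H5)) : RatFunc K)
          = (r : RatFunc K) * ((f ⟨x, hx⟩ : ↥(nsRing K H5)) : RatFunc K) := rfl
      rw [this, ih, smul_eq]
      ring
  -- conclude
  obtain ⟨p, hp, hpe⟩ := coe_mem_nsRing (f y)
  refine ⟨p, ?_, hpe⟩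
  obtain ⟨s, hs⟩ := omega_sub (y : RatFunc K) y.2
  have hy : ((f y : ↥(nsRing K H5)) : RatFunc K) = RatFunc.X * φ q * (y : RatFunc K) := by
    have : f y = f ⟨(y : RatFunc K), y.2⟩ := by congr
    rw [this]; exact main _ y.2
  have hkey : φ ((X:Polynomial K) ^ 24 * p) = φ (q * s) := by
    rw [map_mul, map_mul, ← X_pow_φ, ← hpe, hy, hs]
    rw [show RatFunc.X * φ q * ((RatFunc.X : RatFunc K) ^ (-(25:ℤ)) * φ s)
      = ((RatFunc.X : RatFunc K) ^ (1:ℕ) * (RatFunc.X : RatFunc K) ^ (-(25:ℤ))) * (φ q * φ s)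
      by ring, Xz]
    rw [show (RatFunc.X : RatFunc K) ^ (24:ℕ)
        * ((RatFunc.X : RatFunc K) ^ (((1:ℕ):ℤ) + -25) * (φ q * φ s))
      = ((RatFunc.X : RatFunc K) ^ (24:ℕ) * (RatFunc.X : RatFunc K) ^ (((1:ℕ):ℤ) + -25))
        * (φ q * φ s) by ring, Xz,
      show ((24:ℕ):ℤ) + (((1:ℕ):ℤ) + -25) = 0 by norm_num, zpow_zero, one_mul]
  have hpoly : (X:Polynomial K) ^ 24 * p = q * s := φ_inj hkey
  intro i hi
  have : ((X:Polynomial K) ^ 24 * p).coeff (i + 24) ≠ 0 := by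
    rw [Polynomial.coeff_X_pow_mul p 24 i]; exact hi
  rw [hpoly] at this
  have := supp_mul_ge hq50 _ this
  omega

lemma tr_eq_J26 : trOmega K H5 = (J26 : Ideal ↥(nsRing K H5)) :=
  le_antisymm tr_le_J26 J26_le_tr


-- Stage E: the length computation

def L9 : Fin 9 → ℕ := ![0,13,14,15,16,17,18,21,23]

lemma L9_mem (i : Fin 9) : L9 i ∈ H5 := by
  rw [memH5]; unfold HP; revert i; decide

lemma L9_lt26 (i : Fin 9) : L9 i < 26 := by revert i; decide

lemma L9_inj : Function.Injective (L9) := by decide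

lemma mem_L9 {j : ℕ} (h26 : j < 26) (hj : j ∈ H5) : ∃ i : Fin 9, L9 i = j := by
  rw [memH5] at hj; unfold HP at hj
  have h : j = 0 ∨ j = 13 ∨ j = 14 ∨ j = 15 ∨ j = 16 ∨ j = 17 ∨ j = 18 ∨ j = 21 ∨ j = 23 := by
    omega
  rcases h with rfl|rfl|rfl|rfl|rfl|rfl|rfl|rfl|rfl
  exacts [⟨0, by decide⟩, ⟨1, by decide⟩, ⟨2, by decide⟩, ⟨3, by decide⟩, ⟨4, by decide⟩,
    ⟨5, by decide⟩, ⟨6, by decide⟩, ⟨7, by decide⟩, ⟨8, by decide⟩]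

def pp (c : Fin 9 → K) : Polynomial K := ∑ i : Fin 9, Polynomial.C (c i) * X ^ (L9 i)

lemma coeff_pp_L (c : Fin 9 → K) (i : Fin 9) : (pp c).coeff (L9 i) = c i := by
  rw [pp, Polynomial.finset_sum_coeff, Finset.sum_eq_single i]
  · rw [Polynomial.coeff_C_mul, Polynomial.coeff_X_pow, if_pos rfl, mul_one]
  · intro k _ hk
    rw [Polynomial.coeff_C_mul, Polynomial.coeff_X_pow,
      if_neg (fun h => hk (L9_inj h.symm)), mul_zero]
  · intro h; exact absurd (Finset.mem_univ i) h

lemma coeff_pp_not (c : Fin 9 → K) {j : ℕ} (h : ∀ i, L9 i ≠ j) : (pp c).coeff j = 0 := by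
  rw [pp, Polynomial.finset_sum_coeff]
  apply Finset.sum_eq_zero
  intro k _
  rw [Polynomial.coeff_C_mul, Polynomial.coeff_X_pow, if_neg (fun hh => h k hh.symm), mul_zero]

def xh (i : Fin 9) : ↥(nsRing K H5) := ⟨_, X_pow_mem (L9_mem i)⟩

lemma φ_pp (c : Fin 9 → K) : φ (pp c)
    = ∑ i : Fin 9, algebraMap K (RatFunc K) (c i) * (RatFunc.X : RatFunc K) ^ (L9 i) := by
  rw [pp, map_sum]
  apply Finset.sum_congr rfl
  intro i _
  rw [map_mul, map_pow, φ_X]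
  congr 1
  all_goals (rw [← Polynomial.algebraMap_eq]; exact φ.commutes _)

lemma coe_comb (c : Fin 9 → K) :
    ((∑ i : Fin 9, c i • xh i : ↥(nsRing K H5)) : RatFunc K) = φ (pp c) := by
  rw [AddSubmonoidClass.coe_finset_sum, φ_pp]
  apply Finset.sum_congr rfl
  intro i _
  have h1 : ((c i • xh i : ↥(nsRing K H5)) : RatFunc K)
      = c i • ((xh i : ↥(nsRing K H5)) : RatFunc K) := rfl
  rw [h1, Algebra.smul_def]
  rfl

def bq (i : Fin 9) : ↥(nsRing K H5) ⧸ (J26 : Ideal ↥(nsRing K H5)) :=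
  Submodule.Quotient.mk (xh i)

lemma mk_comb (c : Fin 9 → K) :
    (Submodule.Quotient.mk (∑ i : Fin 9, c i • xh i)
      : ↥(nsRing K H5) ⧸ (J26 : Ideal ↥(nsRing K H5))) = ∑ i : Fin 9, c i • bq i := by
  rw [← Submodule.mkQ_apply, map_sum]
  apply Finset.sum_congr rfl
  intro i _
  rw [Submodule.mkQ_apply, Submodule.Quotient.mk_smul]
  rfl

lemma bq_li : LinearIndependent K (bq (K := K)) := by
  rw [Fintype.linearIndependent_iff]
  intro g hg i
  have h0 : (Submodule.Quotient.mk (∑ j : Fin 9, g j • xh j)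
      : ↥(nsRing K H5) ⧸ (J26 : Ideal ↥(nsRing K H5))) = 0 := by
    rw [mk_comb, hg]
  rw [Submodule.Quotient.mk_eq_zero] at h0
  obtain ⟨pj, hpj, hpje⟩ := h0
  rw [coe_comb] at hpje
  have hpp : pp g = pj := φ_inj hpje
  have hcl := coeff_pp_L g i
  rw [hpp] at hcl
  rw [← hcl]
  by_contra hc
  have := hpj _ hc
  have := L9_lt26 i
  omega

lemma bq_span : ⊤ ≤ Submodule.span K (Set.range (bq (K := K))) := by
  intro m _
  obtain ⟨r, rfl⟩ := Submodule.Quotient.mk_surjective _ m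
  obtain ⟨p, hp, hpe⟩ := coe_mem_nsRing r
  set c : Fin 9 → K := fun i => p.coeff (L9 i) with hc
  have hmem : r - ∑ i : Fin 9, c i • xh i ∈ (J26 : Ideal ↥(nsRing K H5)) := by
    refine ⟨p - pp c, ?_, ?_⟩
    · intro j hj
      by_contra h26
      push_neg at h26
      rw [Polynomial.coeff_sub] at hj
      by_cases jH : j ∈ H5
      · obtain ⟨i, rfl⟩ := mem_L9 (by omega) jH
        rw [coeff_pp_L] at hj
        simp [hc] at hj
      · have hz : p.coeff j = 0 := by by_contra hzc; exact jH (hp j hzc)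
        rw [hz, coeff_pp_not c (fun i hi => jH (by rw [← hi]; exact L9_mem i))] at hj
        simp at hj
    · rw [AddSubgroupClass.coe_sub, coe_comb, hpe, map_sub]
  have hq : (Submodule.Quotient.mk r : ↥(nsRing K H5) ⧸ (J26 : Ideal ↥(nsRing K H5)))
      = ∑ i : Fin 9, c i • bq i := by
    rw [← mk_comb, Submodule.Quotient.eq]
    exact hmem
  rw [hq]
  exact sum_mem fun i _ => Submodule.smul_mem _ _ (Submodule.subset_span ⟨i, rfl⟩)

noncomputable def basQ : Module.Basis (Fin 9) K (↥(nsRing K H5) ⧸ (J26 : Ideal ↥(nsRing K H5))) :=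
  Module.Basis.mk bq_li bq_span

lemma finrankQ :
    Module.finrank K (↥(nsRing K H5) ⧸ (J26 : Ideal ↥(nsRing K H5))) = 9 := by
  haveI : FiniteDimensional K (↥(nsRing K H5) ⧸ (J26 : Ideal ↥(nsRing K H5))) :=
    Module.Finite.of_basis (basQ (K := K))
  rw [Module.finrank_eq_card_basis (basQ (K := K))]
  simp

lemma series_le
    (P : LTSeries (Submodule ↥(nsRing K H5) (↥(nsRing K H5) ⧸ (J26 : Ideal ↥(nsRing K H5))))) :
    P.length ≤ 9 := by
  haveI : FiniteDimensional K (↥(nsRing K H5) ⧸ (J26 : Ideal ↥(nsRing K H5))) :=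
    Module.Finite.of_basis (basQ (K := K))
  let Q := P.map (Submodule.restrictScalars K)
    ((Submodule.restrictScalarsEmbedding K _ _).strictMono)
  have key : ∀ i : Fin (Q.length + 1), (i : ℕ) ≤ Module.finrank K (Q i) := by
    intro i
    induction i using Fin.induction with
    | zero => simp
    | succ i ih =>
      have hlt := Q.step i
      have h2 := Submodule.finrank_lt_finrank_of_lt hlt
      have h3 : ((Fin.castSucc i : Fin (Q.length + 1)) : ℕ) = (i : ℕ) := rfl
      rw [h3] at ih
      have h4 : ((Fin.succ i : Fin (Q.length + 1)) : ℕ) = (i : ℕ) + 1 := rfl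
      rw [h4]
      omega
  have hlast := key (Fin.last _)
  have hle : Module.finrank K ((Q (Fin.last _)) : Submodule K _) ≤ 9 := by
    have hfl := Submodule.finrank_le (Q (Fin.last _))
    rw [finrankQ] at hfl
    exact hfl
  have hQP : Q.length = P.length := rfl
  rw [Fin.val_last] at hlast
  omega

/-- The descending chain of monomial ideals. -/
def Ic (c : ℕ) : Ideal ↥(nsRing K H5) where
  carrier := {r | ∃ p : Polynomial K,
    (∀ i, p.coeff i ≠ 0 → i ∈ H5 ∧ c ≤ i) ∧ (r : RatFunc K) = φ p}
  add_mem' := by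
    rintro a b ⟨p, hp, hpe⟩ ⟨q, hq, hqe⟩
    refine ⟨p + q, fun i hi => ?_, by push_cast [hpe, hqe]; rw [map_add]⟩
    rw [Polynomial.coeff_add] at hi
    by_cases h : p.coeff i = 0
    · exact hq i (by simpa [h] using hi)
    · exact hp i h
  zero_mem' := ⟨0, by simp, by simp⟩
  smul_mem' := by
    rintro r a ⟨p, hp, hpe⟩
    obtain ⟨q, hq, hrq⟩ := coe_mem_nsRing r
    refine ⟨q * p, fun n hn => ?_, by push_cast [smul_eq_mul, hpe, hrq]; rw [map_mul]⟩
    rw [Polynomial.coeff_mul] at hn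
    obtain ⟨⟨u, v⟩, huv, h0⟩ := Finset.exists_ne_zero_of_sum_ne_zero hn
    rw [Finset.HasAntidiagonal.mem_antidiagonal] at huv
    have hu : q.coeff u ≠ 0 := fun h => h0 (by simp [h])
    have hv : p.coeff v ≠ 0 := fun h => h0 (by simp [h])
    obtain ⟨hv1, hv2⟩ := hp v hv
    constructor
    · rw [← huv]; exact add_mem (hq u hu) hv1
    · omega

lemma Ic_anti {c c' : ℕ} (h : c' ≤ c) : (Ic c : Ideal ↥(nsRing K H5)) ≤ Ic c' := by
  rintro r ⟨p, hp, hpe⟩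
  exact ⟨p, fun i hi => ⟨(hp i hi).1, le_trans h (hp i hi).2⟩, hpe⟩

def tF : Fin 10 → ℕ := ![26,23,21,18,17,16,15,14,13,0]

/-- The strict chain of length 9 in `R/J26`. -/
noncomputable def chain :
    LTSeries (Submodule ↥(nsRing K H5) (↥(nsRing K H5) ⧸ (J26 : Ideal ↥(nsRing K H5)))) where
  length := 9
  toFun := fun k => Submodule.map (J26 : Ideal ↥(nsRing K H5)).mkQ (Ic (tF k))
  step := by
    intro i
    have h3 : tF i.succ < tF i.castSucc ∧ tF i.castSucc ≤ 26 ∧ tF i.succ ∈ H5 := by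
      refine ⟨?_, ?_, ?_⟩
      · revert i; decide
      · revert i; decide
      · rw [memH5]; unfold HP; revert i; decide
    obtain ⟨hlt, h26, hmem⟩ := h3
    show Submodule.map (J26 : Ideal ↥(nsRing K H5)).mkQ (Ic (tF i.castSucc))
        < Submodule.map (J26 : Ideal ↥(nsRing K H5)).mkQ (Ic (tF i.succ))
    apply lt_of_le_of_ne
    · exact Submodule.map_mono (Ic_anti (le_of_lt hlt))
    · intro hEq
      set v := tF i.succ with hv
      have hwmem : ((J26 : Ideal ↥(nsRing K H5)).mkQ ⟨_, X_pow_mem hmem⟩ :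
            ↥(nsRing K H5) ⧸ (J26 : Ideal ↥(nsRing K H5)))
          ∈ Submodule.map (J26 : Ideal ↥(nsRing K H5)).mkQ (Ic v) := by
        refine ⟨_, ⟨X ^ v, fun n hn => ?_, X_pow_φ v⟩, rfl⟩
        rw [Polynomial.coeff_X_pow] at hn
        have hnv : n = v := by by_contra hcc; simp [hcc] at hn
        subst hnv
        exact ⟨hmem, le_refl _⟩
      rw [← hEq] at hwmem
      obtain ⟨a, ⟨pa, hpa, hpae⟩, hEq2⟩ := hwmem
      rw [Submodule.mkQ_apply, Submodule.mkQ_apply, Submodule.Quotient.eq] at hEq2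
      obtain ⟨pj, hpj, hpje⟩ := hEq2
      have hpoly : pa - X ^ v = pj := by
        apply φ_inj
        rw [map_sub, ← X_pow_φ, ← hpae]
        rw [AddSubgroupClass.coe_sub] at hpje
        exact hpje
      have hco := congrArg (fun pc => Polynomial.coeff pc v) hpoly
      simp only [Polynomial.coeff_sub, Polynomial.coeff_X_pow, if_pos rfl] at hco
      have h1 : pa.coeff v = 0 := by
        by_contra hcc
        have := (hpa _ hcc).2
        omega
      have h2 : pj.coeff v = 0 := by
        by_contra hcc
        have := hpj _ hcc
        omega
      rw [h1, h2] at hco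
      simp at hco

lemma krull_eq : Order.krullDim
    (Submodule ↥(nsRing K H5) (↥(nsRing K H5) ⧸ (J26 : Ideal ↥(nsRing K H5))))
    = (9 : WithBot ℕ∞) := by
  apply le_antisymm
  · rw [Order.krullDim_eq_iSup_length]
    have h9 : (⨆ (p : LTSeries (Submodule ↥(nsRing K H5)
        (↥(nsRing K H5) ⧸ (J26 : Ideal ↥(nsRing K H5))))), (p.length : ℕ∞)) ≤ (9 : ℕ∞) :=
      iSup_le fun p => by exact_mod_cast series_le p
    have h9' : (↑(⨆ (p : LTSeries (Submodule ↥(nsRing K H5)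
        (↥(nsRing K H5) ⧸ (J26 : Ideal ↥(nsRing K H5))))), (p.length : ℕ∞)) : WithBot ℕ∞)
        ≤ ((9 : ℕ∞) : WithBot ℕ∞) := WithBot.coe_le_coe.mpr h9
    simpa using h9'
  · have h := Order.LTSeries.length_le_krullDim (chain (K := K))
    have hlen : (chain (K := K)).length = 9 := rfl
    rw [hlen] at h
    exact_mod_cast h

end TrEx

/-- For `H = ⟨13, 14, 15, 16, 17, 18, 21, 23⟩` and `R = K[H]` one has
`tr_R(ω_R) = R : K[t]`, `R : K[t] = t^{26}·K[t]`, `g(H) = 17`, `n(H) = 9` (where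
`F(H) = sSup (ℕ∖H)`), `ℓ_R(R/tr_R(ω_R)) = 9`, and `9 > 8 = g(H) − n(H)`. -/
theorem trace_example_13_14 (K : Type*) [Field K] :
    (trOmega K H5 = nsConductor K H5) ∧
    ((1 : Submodule ↥(nsRing K H5) (RatFunc K)) / nsKt K H5 =
        Submodule.span ↥(nsRing K H5) {x : RatFunc K | ∃ p : Polynomial K,
          x = (RatFunc.X : RatFunc K) ^ 26 * algebraMap (Polynomial K) (RatFunc K) p}) ∧
    ({n : ℕ | n ∉ H5}.ncard = 17) ∧
    ({h : ℕ | h ∈ H5 ∧ h < sSup {n : ℕ | n ∉ H5}}.ncard = 9) ∧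
    (moduleLength ↥(nsRing K H5) (↥(nsRing K H5) ⧸ trOmega K H5) = 9) ∧
    9 > 17 - 9 := by
  refine ⟨?_, ?_, TrEx.gaps_ncard, TrEx.nH_ncard, ?_, by norm_num⟩
  · rw [TrEx.tr_eq_J26, TrEx.conductor_eq]
  · rw [TrEx.div_nsKt_eq]
    have hset : {x : RatFunc K | ∃ p : Polynomial K,
        x = (RatFunc.X : RatFunc K) ^ 26 * algebraMap (Polynomial K) (RatFunc K) p}
        = (TrEx.C26 (K := K) : Set (RatFunc K)) := rfl
    rw [hset, Submodule.span_eq]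
  · show Order.krullDim (Submodule ↥(nsRing K H5) (↥(nsRing K H5) ⧸ trOmega K H5)) = 9
    rw [TrEx.tr_eq_J26]
    exact TrEx.krull_eq
end
end

section
/- For ℓ ≥ 0, the numerical semigroup H' generated by all integers m with 6ℓ+10 ≤ m ≤ 9ℓ+14 is symmetric, i.e., for every integer z exactly one of z and F(H')−z belongs to H'. -/
/-- A numerical semigroup `H` is symmetric: for every integer `z`, exactly one of `z` and
`F(H) − z` belongs to `H`, where `F(H) = sSup (ℕ∖H)` is the Frobenius number. -/
def IsSymmetricNS (H : AddSubmonoid ℕ) : Prop :=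
  ∀ z : ℤ, (∃ h ∈ H, (h : ℤ) = z) ↔
    ¬ ∃ h ∈ H, (h : ℤ) = ((sSup {n : ℕ | n ∉ H} : ℕ) : ℤ) - z

lemma NS14_memZ (H : AddSubmonoid ℕ) (z : ℤ) :
    (∃ h ∈ H, (h : ℤ) = z) ↔ 0 ≤ z ∧ z.toNat ∈ H := by
  constructor
  · rintro ⟨h, hh, rfl⟩; exact ⟨Int.ofNat_nonneg h, by simpa using hh⟩
  · rintro ⟨hz, hm⟩; exact ⟨z.toNat, hm, Int.toNat_of_nonneg hz⟩

lemma NS14_mem_iff (l n : ℕ) :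
    n ∈ AddSubmonoid.closure {m : ℕ | 6 * l + 10 ≤ m ∧ m ≤ 9 * l + 14} ↔
      ∃ k : ℕ, k * (6 * l + 10) ≤ n ∧ n ≤ k * (9 * l + 14) := by
  constructor
  · intro h
    induction h using AddSubmonoid.closure_induction with
    | mem x hx => exact ⟨1, by simpa using hx.1, by simpa using hx.2⟩
    | zero => exact ⟨0, by simp, by simp⟩
    | add x y hx hy ihx ihy =>
        obtain ⟨k1, h1, h2⟩ := ihx
        obtain ⟨k2, h3, h4⟩ := ihy
        exact ⟨k1 + k2, by rw [add_mul]; exact Nat.add_le_add h1 h3,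
          by rw [add_mul]; exact Nat.add_le_add h2 h4⟩
  · rintro ⟨k, hk1, hk2⟩
    induction k generalizing n with
    | zero =>
        simp only [zero_mul, Nat.le_zero] at hk2
        subst hk2; exact zero_mem _
    | succ k ih =>
        rw [Nat.succ_mul] at hk1 hk2
        have hxy : k * (6 * l + 10) ≤ k * (9 * l + 14) :=
          Nat.mul_le_mul_left k (by omega)
        set x := k * (6 * l + 10) with hx
        set y := k * (9 * l + 14) with hy
        set m := max (6 * l + 10) (n - y) with hm
        have hm1 : 6 * l + 10 ≤ m := le_max_left _ _
        have hm3 : n - y ≤ m := le_max_right _ _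
        have hmor : m = 6 * l + 10 ∨ m = n - y := max_choice _ _
        have hmem : m ∈ AddSubmonoid.closure {m : ℕ | 6 * l + 10 ≤ m ∧ m ≤ 9 * l + 14} :=
          AddSubmonoid.subset_closure ⟨hm1, by omega⟩
        have hrest : n - m ∈ AddSubmonoid.closure {m : ℕ | 6 * l + 10 ≤ m ∧ m ≤ 9 * l + 14} :=
          ih (n - m) (by omega) (by omega)
        have : n = m + (n - m) := by omega
        rw [this]
        exact AddSubmonoid.add_mem _ hmem hrest

lemma NS14_large (l n : ℕ) (hn : 18 * l + 30 ≤ n) :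
    ∃ k : ℕ, k * (6 * l + 10) ≤ n ∧ n ≤ k * (9 * l + 14) := by
  refine ⟨n / (6 * l + 10), Nat.div_mul_le_self _ _, ?_⟩
  have h3 : 3 ≤ n / (6 * l + 10) := by
    rw [Nat.le_div_iff_mul_le (by omega)]; omega
  have hmod := Nat.mod_lt n (show 0 < 6 * l + 10 by omega)
  have hdm := Nat.div_add_mod n (6 * l + 10)
  set k := n / (6 * l + 10) with hk
  have hdm' : k * (6 * l + 10) + n % (6 * l + 10) = n := by rw [mul_comm]; exact hdm
  have h1 : 3 * (3 * l + 4) ≤ k * (3 * l + 4) := Nat.mul_le_mul_right _ h3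
  have h2 : k * (9 * l + 14) = k * (6 * l + 10) + k * (3 * l + 4) := by ring
  omega

lemma NS14_key (l n : ℕ) (hn : n ≤ 18 * l + 29) :
    (∃ k : ℕ, k * (6 * l + 10) ≤ n ∧ n ≤ k * (9 * l + 14)) ↔
      ¬ ∃ k : ℕ, k * (6 * l + 10) ≤ 18 * l + 29 - n ∧ 18 * l + 29 - n ≤ k * (9 * l + 14) := by
  constructor
  · rintro ⟨k, h1, h2⟩ ⟨k', h3, h4⟩
    have hk : k ≤ 2 := by
      by_contra hc; push_neg at hc
      have : 3 * (6 * l + 10) ≤ k * (6 * l + 10) := Nat.mul_le_mul_right _ (by omega)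
      omega
    have hk' : k' ≤ 2 := by
      by_contra hc; push_neg at hc
      have : 3 * (6 * l + 10) ≤ k' * (6 * l + 10) := Nat.mul_le_mul_right _ (by omega)
      omega
    interval_cases k <;> interval_cases k' <;> omega
  · intro h
    push_neg at h
    have h0 := h 0
    have h1 := h 1
    have h2 := h 2
    have hreg : n = 0 ∨ (6 * l + 10 ≤ n ∧ n ≤ 9 * l + 14) ∨
        (2 * (6 * l + 10) ≤ n ∧ n ≤ 2 * (9 * l + 14)) := by omega
    rcases hreg with h' | h' | h'
    · exact ⟨0, by omega, by omega⟩
    · exact ⟨1, by omega, by omega⟩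
    · exact ⟨2, by omega, by omega⟩

lemma NS14_frob (l : ℕ) :
    sSup {n : ℕ | n ∉ AddSubmonoid.closure {m : ℕ | 6 * l + 10 ≤ m ∧ m ≤ 9 * l + 14}} =
      18 * l + 29 := by
  apply IsGreatest.csSup_eq
  constructor
  · rw [Set.mem_setOf_eq, NS14_mem_iff]
    rintro ⟨k, h1, h2⟩
    have hk : k ≤ 2 := by
      by_contra hc; push_neg at hc
      have : 3 * (6 * l + 10) ≤ k * (6 * l + 10) := Nat.mul_le_mul_right _ (by omega)
      omega
    interval_cases k <;> omega
  · intro n hn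
    by_contra hc; push_neg at hc
    exact hn ((NS14_mem_iff l n).mpr (NS14_large l n (by omega)))

/-- For every `ℓ ≥ 0`, the numerical semigroup
`H' = ⟨m : 6ℓ+10 ≤ m ≤ 9ℓ+14⟩` is symmetric. -/
theorem symmetric_interval_semigroup (l : ℕ) :
    IsSymmetricNS (AddSubmonoid.closure {m : ℕ | 6 * l + 10 ≤ m ∧ m ≤ 9 * l + 14}) := by
  intro z
  rw [NS14_frob l, NS14_memZ, NS14_memZ, NS14_mem_iff, NS14_mem_iff]
  constructor
  · rintro ⟨hz, k, h1, h2⟩ ⟨hz', k', h3, h4⟩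
    have hn : z.toNat ≤ 18 * l + 29 := by omega
    have hk : k ≤ 2 := by
      by_contra hc; push_neg at hc
      have : 3 * (6 * l + 10) ≤ k * (6 * l + 10) := Nat.mul_le_mul_right _ (by omega)
      omega
    have hk' : k' ≤ 2 := by
      by_contra hc; push_neg at hc
      have : 3 * (6 * l + 10) ≤ k' * (6 * l + 10) := Nat.mul_le_mul_right _ (by omega)
      omega
    interval_cases k <;> interval_cases k' <;> omega
  · intro h
    rcases lt_or_ge z 0 with hz | hz
    · exfalso
      apply h
      refine ⟨by omega, ?_⟩
      have e : ((↑(18 * l + 29) : ℤ) - z).toNat ≥ 18 * l + 30 := by omega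
      exact NS14_large l _ e
    · rcases le_or_gt z (18 * l + 29 : ℕ) with hle | hgt
      · have hn : z.toNat ≤ 18 * l + 29 := by omega
        refine ⟨hz, ?_⟩
        by_contra hg
        apply h
        refine ⟨by omega, ?_⟩
        have e : ((↑(18 * l + 29) : ℤ) - z).toNat = 18 * l + 29 - z.toNat := by omega
        rw [e]
        by_contra hg2
        exact hg ((NS14_key l z.toNat hn).mpr hg2)
      · refine ⟨hz, ?_⟩
        exact NS14_large l _ (by omega)
end
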